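/- arXiv:2505.22174 — 5 statements merged into one kernel-verified Lean document; each statement's English description precedes it below -/
import Mathlib

section
/- Let n ≥ 1 be an integer, M a finite set of goods, and for each agent i ∈ Fin n let v_i : M → ℝ be a valuation with 1 ≤ v_i(g) ≤ α_i for every g ∈ M, where α_i ≥ 1; let v̂_i be the corresponding threshold valuation. Let (A_1, …, A_n) be pairwise disjoint subsets of M, let ρ ∈ (0,1] and k ∈ ℕ. If for all agents i, j there exists X ⊆ A_j with |X| ≤ k and v̂_i(A_i) ≥ ρ · v̂_i(A_j ∖ X), then for all agents i, j there exists X ⊆ A_j with |X| ≤ k and v_i(A_i) ≥ (ρ/√α_i) · v_i(A_j ∖ X). -/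
open Finset

noncomputable section

/-- The threshold valuation associated with `v` and `α`. -/
def vhat {G : Type*} (α : ℝ) (v : G → ℝ) (g : G) : ℝ :=
  if Real.sqrt α < v g then α else Real.sqrt α

/-- If a (partial) allocation is `ρ`-EF`k` with respect to the threshold valuations, then it is
`(ρ/√(α i))`-EF`k` with respect to the original valuations. -/
theorem statement15 {G : Type*} [DecidableEq G] (n : ℕ) (hn : 1 ≤ n) (M : Finset G)
    (α : Fin n → ℝ) (hα : ∀ i, 1 ≤ α i)
    (v : Fin n → G → ℝ) (hv : ∀ i, ∀ g ∈ M, 1 ≤ v i g ∧ v i g ≤ α i)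
    (A : Fin n → Finset G) (hAM : ∀ i, A i ⊆ M)
    (hdisj : ∀ i j, i ≠ j → Disjoint (A i) (A j))
    (ρ : ℝ) (hρ0 : 0 < ρ) (hρ1 : ρ ≤ 1) (k : ℕ)
    (h : ∀ i j : Fin n, ∃ X ⊆ A j, X.card ≤ k ∧
      ρ * ∑ g ∈ A j \ X, vhat (α i) (v i) g ≤ ∑ g ∈ A i, vhat (α i) (v i) g) :
    ∀ i j : Fin n, ∃ X ⊆ A j, X.card ≤ k ∧
      (ρ / Real.sqrt (α i)) * ∑ g ∈ A j \ X, v i g ≤ ∑ g ∈ A i, v i g := by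
  intro i j
  obtain ⟨X, hX, hcard, hineq⟩ := h i j
  refine ⟨X, hX, hcard, ?_⟩
  have hα0 : (0 : ℝ) ≤ α i := le_trans zero_le_one (hα i)
  have hs1 : 1 ≤ Real.sqrt (α i) := by
    rw [show (1:ℝ) = Real.sqrt 1 from (Real.sqrt_one).symm]
    exact Real.sqrt_le_sqrt (hα i)
  have hs0 : 0 < Real.sqrt (α i) := lt_of_lt_of_le zero_lt_one hs1
  -- termwise: v ≤ vhat on M
  have hle : ∀ g ∈ M, v i g ≤ vhat (α i) (v i) g := by
    intro g hg
    unfold vhat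
    split_ifs with hsplit
    · exact (hv i g hg).2
    · exact not_lt.mp hsplit
  -- termwise: vhat ≤ √α * v on M
  have hle2 : ∀ g ∈ M, vhat (α i) (v i) g ≤ Real.sqrt (α i) * v i g := by
    intro g hg
    unfold vhat
    split_ifs with hsplit
    · have : Real.sqrt (α i) * Real.sqrt (α i) = α i := Real.mul_self_sqrt hα0
      nlinarith [hsplit, hs0]
    · nlinarith [(hv i g hg).1, hs0]
  have hsub : A j \ X ⊆ M := fun g hg => hAM j (mem_sdiff.mp hg).1
  have h1 : ∑ g ∈ A j \ X, v i g ≤ ∑ g ∈ A j \ X, vhat (α i) (v i) g :=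
    Finset.sum_le_sum fun g hg => hle g (hsub hg)
  have h2 : ∑ g ∈ A i, vhat (α i) (v i) g ≤ Real.sqrt (α i) * ∑ g ∈ A i, v i g := by
    rw [Finset.mul_sum]
    exact Finset.sum_le_sum fun g hg => hle2 g (hAM i hg)
  rw [div_mul_eq_mul_div, div_le_iff₀ hs0]
  calc ρ * ∑ g ∈ A j \ X, v i g
      ≤ ρ * ∑ g ∈ A j \ X, vhat (α i) (v i) g := by
        exact mul_le_mul_of_nonneg_left h1 hρ0.le
    _ ≤ ∑ g ∈ A i, vhat (α i) (v i) g := hineq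
    _ ≤ Real.sqrt (α i) * ∑ g ∈ A i, v i g := h2
    _ = (∑ g ∈ A i, v i g) * Real.sqrt (α i) := mul_comm _ _

end
end

section
/- Let n ≥ 1 be an integer, M a finite set of goods, and for each agent i ∈ Fin n let v_i : M → ℝ be a valuation with 1 ≤ v_i(g) ≤ α_i for every g ∈ M, where α_i ≥ 1; let v̂_i be the corresponding threshold valuation. Let (A_1, …, A_n) be pairwise disjoint subsets of M, ρ ∈ (0,1], and i an agent. If v̂_i(A_i) ≥ (ρ/n) · v̂_i(A_1 ∪ … ∪ A_n), then v_i(A_i) ≥ (ρ/(n·√α_i)) · v_i(A_1 ∪ … ∪ A_n). If v̂_i(A_i) ≥ ρ · μ_{v̂_i}^n(A_1 ∪ … ∪ A_n), then v_i(A_i) ≥ (ρ/√α_i) · μ_{v_i}^n(A_1 ∪ … ∪ A_n). -/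
open Finset

noncomputable section

/-- The `n`-agent maximin share of the additive valuation `w` over the finite set `S` of goods. -/
def mmsG {G : Type*} (n : ℕ) (S : Finset G) (w : G → ℝ) : ℝ :=
  sSup { x : ℝ | ∃ P : G → Fin n,
    x = ⨅ j : Fin n, ∑ g ∈ S.filter (fun g => P g = j), w g }

lemma mmsG_bddAbove {G : Type*} [DecidableEq G] (n : ℕ) (hn : 1 ≤ n) (S : Finset G)
    (w : G → ℝ) (h0 : ∀ g ∈ S, 0 ≤ w g) :
    BddAbove { x : ℝ | ∃ P : G → Fin n,
      x = ⨅ j : Fin n, ∑ g ∈ S.filter (fun g => P g = j), w g } := by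
  refine ⟨∑ g ∈ S, w g, ?_⟩
  rintro x ⟨P, rfl⟩
  have h1 : (⨅ j : Fin n, ∑ g ∈ S.filter (fun g => P g = j), w g) ≤
      ∑ g ∈ S.filter (fun g => P g = ⟨0, hn⟩), w g :=
    ciInf_le (Set.Finite.bddBelow (Set.finite_range _)) _
  refine h1.trans (Finset.sum_le_sum_of_subset_of_nonneg (Finset.filter_subset _ _) ?_)
  intro g hg _
  exact h0 g hg

lemma mmsG_mono {G : Type*} [DecidableEq G] (n : ℕ) (hn : 1 ≤ n) (S : Finset G)
    (w₁ w₂ : G → ℝ) (h0 : ∀ g ∈ S, 0 ≤ w₂ g) (h : ∀ g ∈ S, w₁ g ≤ w₂ g) :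
    mmsG n S w₁ ≤ mmsG n S w₂ := by
  have hne : { x : ℝ | ∃ P : G → Fin n,
      x = ⨅ j : Fin n, ∑ g ∈ S.filter (fun g => P g = j), w₁ g }.Nonempty :=
    ⟨_, fun _ => ⟨0, hn⟩, rfl⟩
  refine csSup_le hne ?_
  rintro x ⟨P, rfl⟩
  have h2 : (⨅ j : Fin n, ∑ g ∈ S.filter (fun g => P g = j), w₁ g) ≤
      ⨅ j : Fin n, ∑ g ∈ S.filter (fun g => P g = j), w₂ g := by
    refine ciInf_mono (Set.Finite.bddBelow (Set.finite_range _)) ?_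
    intro j
    exact Finset.sum_le_sum fun g hg => h g (Finset.mem_filter.mp hg).1
  exact h2.trans (le_csSup (mmsG_bddAbove n hn S w₂ h0) ⟨P, rfl⟩)

/-- If an allocation is `ρ`-PROP (resp. `ρ`-MMS) for agent `i` with respect to the threshold
valuations, then it is `(ρ/√(α i))`-PROP (resp. `(ρ/√(α i))`-MMS) for `i` with respect to the
original valuations. -/
theorem statement16 {G : Type*} [DecidableEq G] (n : ℕ) (hn : 1 ≤ n) (M : Finset G)
    (α : Fin n → ℝ) (hα : ∀ i, 1 ≤ α i)
    (v : Fin n → G → ℝ) (hv : ∀ i, ∀ g ∈ M, 1 ≤ v i g ∧ v i g ≤ α i)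
    (A : Fin n → Finset G) (hAM : ∀ i, A i ⊆ M)
    (hdisj : ∀ i j, i ≠ j → Disjoint (A i) (A j))
    (ρ : ℝ) (hρ0 : 0 < ρ) (hρ1 : ρ ≤ 1) (i : Fin n) :
    ((ρ / (n : ℝ)) * ∑ g ∈ Finset.univ.biUnion A, vhat (α i) (v i) g ≤
        ∑ g ∈ A i, vhat (α i) (v i) g →
      (ρ / ((n : ℝ) * Real.sqrt (α i))) * ∑ g ∈ Finset.univ.biUnion A, v i g ≤
        ∑ g ∈ A i, v i g) ∧
    (ρ * mmsG n (Finset.univ.biUnion A) (vhat (α i) (v i)) ≤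
        ∑ g ∈ A i, vhat (α i) (v i) g →
      (ρ / Real.sqrt (α i)) * mmsG n (Finset.univ.biUnion A) (v i) ≤
        ∑ g ∈ A i, v i g) := by
  set S := Finset.univ.biUnion A with hS
  set s := Real.sqrt (α i) with hs
  have ha : (1 : ℝ) ≤ α i := hα i
  have ha0 : (0 : ℝ) ≤ α i := zero_le_one.trans ha
  have hs1 : (1 : ℝ) ≤ s := by
    rw [hs, show (1:ℝ) = Real.sqrt 1 by simp]
    exact Real.sqrt_le_sqrt ha
  have hs0 : (0 : ℝ) < s := lt_of_lt_of_le zero_lt_one hs1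
  have hss : s * s = α i := Real.mul_self_sqrt ha0
  have hSM : S ⊆ M := by
    intro g hg
    rw [hS, Finset.mem_biUnion] at hg
    obtain ⟨j, _, hj⟩ := hg
    exact hAM j hj
  -- pointwise facts
  have hvle : ∀ g ∈ M, v i g ≤ vhat (α i) (v i) g := by
    intro g hg
    unfold vhat
    split_ifs with h
    · exact (hv i g hg).2
    · exact le_of_not_gt h
  have hhatle : ∀ g ∈ M, vhat (α i) (v i) g ≤ s * v i g := by
    intro g hg
    unfold vhat
    split_ifs with h
    · rw [← hss]
      exact mul_le_mul_of_nonneg_left h.le hs0.le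
    · calc s = s * 1 := by ring
        _ ≤ s * v i g := mul_le_mul_of_nonneg_left (hv i g hg).1 hs0.le
  have hv0 : ∀ g ∈ M, 0 ≤ v i g := fun g hg => zero_le_one.trans (hv i g hg).1
  have hhat0 : ∀ g ∈ M, 0 ≤ vhat (α i) (v i) g := fun g hg =>
    (hv0 g hg).trans (hvle g hg)
  -- sum facts
  have hsum1 : ∑ g ∈ S, v i g ≤ ∑ g ∈ S, vhat (α i) (v i) g :=
    Finset.sum_le_sum fun g hg => hvle g (hSM hg)
  have hsum2 : ∑ g ∈ A i, vhat (α i) (v i) g ≤ s * ∑ g ∈ A i, v i g := by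
    rw [Finset.mul_sum]
    exact Finset.sum_le_sum fun g hg => hhatle g (hAM i hg)
  constructor
  · intro h
    have hn0 : (0 : ℝ) < (n : ℝ) := by exact_mod_cast hn
    have key : (ρ / (n : ℝ)) * ∑ g ∈ S, v i g ≤ s * ∑ g ∈ A i, v i g := by
      calc (ρ / (n : ℝ)) * ∑ g ∈ S, v i g
          ≤ (ρ / (n : ℝ)) * ∑ g ∈ S, vhat (α i) (v i) g :=
            mul_le_mul_of_nonneg_left hsum1 (by positivity)
        _ ≤ ∑ g ∈ A i, vhat (α i) (v i) g := h
        _ ≤ s * ∑ g ∈ A i, v i g := hsum2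
    rw [div_mul_eq_mul_div, div_le_iff₀ (by positivity)] at key ⊢
    nlinarith [key]
  · intro h
    have hmono : mmsG n S (v i) ≤ mmsG n S (vhat (α i) (v i)) :=
      mmsG_mono n hn S _ _ (fun g hg => hhat0 g (hSM hg)) (fun g hg => hvle g (hSM hg))
    have key : ρ * mmsG n S (v i) ≤ s * ∑ g ∈ A i, v i g :=
      (mul_le_mul_of_nonneg_left hmono hρ0.le).trans (h.trans hsum2)
    rw [div_mul_eq_mul_div, div_le_iff₀ hs0]
    linarith [key]

end
end

section
/- For every integer n ≥ 1 and every α : Fin n → ℝ with α i > 1 for all i, there exists a deterministic online allocation algorithm F such that for every personalized interval-restricted stream v (i.e., 1 ≤ v t i ≤ α i for all t, i), every agent i, and every time step T: v_i(A_i^T) ≥ μ_i^n(T) / (√(α i) · (2n−1)); moreover, if |{t < T : v t i > √(α i)}| ≥ n, then v_i(A_i^T) ≥ μ_i^n(T) / (4 · √(α i)). -/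
open Finset
open scoped Classical

noncomputable section

/-- The agent to whom good `t` is assigned by the deterministic online algorithm `F`
on stream `v`: `σ(t) = F [v 0, …, v t]`. -/
def alloc (n : ℕ) (F : List (Fin n → NNReal) → Fin n) (v : ℕ → Fin n → NNReal) (t : ℕ) : Fin n :=
  F ((List.range (t + 1)).map v)

/-- The bundle of agent `i` at the end of time step `T`. -/
def bundle (n : ℕ) (F : List (Fin n → NNReal) → Fin n) (v : ℕ → Fin n → NNReal)
    (i : Fin n) (T : ℕ) : Finset ℕ :=
  (Finset.range T).filter fun t => alloc n F v t = i

/-- The (real) value of the bundle `B` for agent `i`. -/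
def bval (n : ℕ) (v : ℕ → Fin n → NNReal) (i : Fin n) (B : Finset ℕ) : ℝ :=
  ∑ t ∈ B, (v t i : ℝ)

/-- The `n`-agent maximin share of the additive valuation `w` over the finite set `S` of goods. -/
def mmsN (n : ℕ) (S : Finset ℕ) (w : ℕ → ℝ) : ℝ :=
  sSup { x : ℝ | ∃ P : ℕ → Fin n,
    x = ⨅ j : Fin n, ∑ t ∈ S.filter (fun t => P t = j), w t }

namespace S17

variable (n : ℕ) (α : Fin n → ℝ)

/-- big-count budget divisor -/
def Dn (n : ℕ) : ℕ := min (4*n) (n*(2*n-1))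

structure St (n : ℕ) where
  mc : Fin n → ℕ
  bc : Fin n → ℕ
  kc : Fin n → ℕ
  time : ℕ

def St.init : St n := ⟨fun _ => 0, fun _ => 0, fun _ => 0, 0⟩

variable [NeZero n]

def argminBy (f : Fin n → ℤ) (A : Finset (Fin n)) : Fin n :=
  if h : (A.filter fun a => ∀ b ∈ A, f a ≤ f b).Nonempty
  then (A.filter fun a => ∀ b ∈ A, f a ≤ f b).min' h
  else default

lemma argminBy_mem (f : Fin n → ℤ) {A : Finset (Fin n)} (h : A.Nonempty) :
    argminBy n f A ∈ A ∧ ∀ b ∈ A, f (argminBy n f A) ≤ f b := by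
  obtain ⟨a, ha, hmin⟩ := A.exists_min_image f h
  have hne : (A.filter fun a => ∀ b ∈ A, f a ≤ f b).Nonempty :=
    ⟨a, mem_filter.2 ⟨ha, hmin⟩⟩
  rw [argminBy, dif_pos hne]
  have := Finset.min'_mem _ hne
  rw [mem_filter] at this
  exact this

def bigS (g : Fin n → NNReal) : Finset (Fin n) :=
  univ.filter fun i => Real.sqrt (α i) < (g i : ℝ)

def knew (s : St n) (g : Fin n → NNReal) (i : Fin n) : ℕ :=
  s.kc i + if i ∈ bigS n α g then 1 else 0

/-- slack of agent i for the big-goods requirement, after seeing good `g` -/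
def rt (s : St n) (g : Fin n → NNReal) (i : Fin n) : ℤ :=
  if s.bc i = 0 then (n : ℤ) - 1 - knew n α s g i
  else (Dn n : ℤ) * s.bc i - knew n α s g i

def keyR (s : St n) (g : Fin n → NNReal) (i : Fin n) : ℤ := rt n α s g i * n + i
def keyM (s : St n) (i : Fin n) : ℤ := (s.mc i : ℤ) * n + i

/-- the big-slack ladder would be violated -/
def violated (s : St n) (g : Fin n → NNReal) : Prop :=
  ∃ q : ℤ, -1 ≤ q ∧ (q + 2) ≤ ((univ.filter fun i => rt n α s g i ≤ q).card : ℤ)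

def unservedSet (s : St n) : Finset (Fin n) := univ.filter fun i => s.mc i = 0

def target (s : St n) (g : Fin n → NNReal) : Fin n :=
  if s.time < n then
    (if (bigS n α g ∩ unservedSet n s).Nonempty
     then argminBy n (keyR n α s g) (bigS n α g ∩ unservedSet n s)
     else argminBy n (keyM n s) (unservedSet n s))
  else
    (if violated n α s g
     then argminBy n (keyR n α s g) (bigS n α g)
     else argminBy n (keyM n s) univ)

def step (s : St n) (g : Fin n → NNReal) : St n :=
  { mc := fun i => s.mc i + if i = target n α s g then 1 else 0
    bc := fun i => s.bc i + if i = target n α s g ∧ i ∈ bigS n α g then 1 else 0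
    kc := knew n α s g
    time := s.time + 1 }

def stSeq (v : ℕ → Fin n → NNReal) : ℕ → St n
  | 0 => St.init n
  | (T+1) => step n α (stSeq v T) (v T)

def Falg : List (Fin n → NNReal) → Fin n :=
  fun l => target n α ((l.dropLast).foldl (step n α) (St.init n)) (l.getLastD default)

/- ---------- bridge lemmas ---------- -/

lemma stSeq_eq_foldl (v : ℕ → Fin n → NNReal) (T : ℕ) :
    stSeq n α v T = ((List.range T).map v).foldl (step n α) (St.init n) := by
  induction T with
  | zero => simp [stSeq]
  | succ T ih =>
      rw [stSeq, ih, List.range_succ, List.map_append, List.foldl_append]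
      simp

lemma alloc_Falg (v : ℕ → Fin n → NNReal) (t : ℕ) :
    alloc n (Falg n α) v t = target n α (stSeq n α v t) (v t) := by
  rw [alloc, Falg]
  have h1 : ((List.range (t+1)).map v).dropLast = (List.range t).map v := by
    rw [List.range_succ, List.map_append]
    simp
  have h2 : ((List.range (t+1)).map v).getLastD default = v t := by
    rw [List.range_succ, List.map_append]
    simp
  rw [h1, h2, stSeq_eq_foldl]

end S17

set_option linter.unusedSectionVars false
namespace S17
variable (n : ℕ) (α : Fin n → ℝ) [NeZero n]

lemma time_stSeq (v : ℕ → Fin n → NNReal) (T : ℕ) : (stSeq n α v T).time = T := by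
  induction T with
  | zero => rfl
  | succ T ih => simp [stSeq, step, ih]

lemma mem_bigS {g : Fin n → NNReal} {i : Fin n} :
    i ∈ bigS n α g ↔ Real.sqrt (α i) < (g i : ℝ) := by
  simp [bigS]

lemma bundle_succ (F : List (Fin n → NNReal) → Fin n) (v : ℕ → Fin n → NNReal)
    (i : Fin n) (T : ℕ) :
    bundle n F v i (T+1) =
      if alloc n F v T = i then insert T (bundle n F v i T) else bundle n F v i T := by
  rw [bundle, bundle, Finset.range_add_one, Finset.filter_insert]

lemma not_mem_bundle_self (F : List (Fin n → NNReal) → Fin n) (v : ℕ → Fin n → NNReal)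
    (i : Fin n) (T : ℕ) : T ∉ bundle n F v i T := by
  intro h
  rw [bundle, mem_filter, Finset.mem_range] at h
  exact lt_irrefl _ h.1

lemma mc_eq_card (v : ℕ → Fin n → NNReal) (i : Fin n) (T : ℕ) :
    (stSeq n α v T).mc i = (bundle n (Falg n α) v i T).card := by
  induction T with
  | zero => simp [stSeq, St.init, bundle]
  | succ T ih =>
      rw [bundle_succ, alloc_Falg]
      show (stSeq n α v T).mc i + _ = _
      by_cases h : target n α (stSeq n α v T) (v T) = i
      · rw [if_pos h, if_pos h.symm,
          Finset.card_insert_of_notMem (not_mem_bundle_self n (Falg n α) v i T), ih]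
      · rw [if_neg (fun hh => h hh.symm), if_neg h, ih, add_zero]

lemma kc_eq_card (v : ℕ → Fin n → NNReal) (i : Fin n) (T : ℕ) :
    (stSeq n α v T).kc i
      = ((Finset.range T).filter fun t => Real.sqrt (α i) < (v t i : ℝ)).card := by
  induction T with
  | zero => simp [stSeq, St.init]
  | succ T ih =>
      rw [Finset.range_add_one, Finset.filter_insert]
      show knew n α (stSeq n α v T) (v T) i = _
      rw [knew, ih]
      by_cases h : Real.sqrt (α i) < (v T i : ℝ)
      · rw [if_pos ((mem_bigS n α).2 h), if_pos h,
          Finset.card_insert_of_notMem (by simp)]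
      · rw [if_neg (fun hh => h ((mem_bigS n α).1 hh)), if_neg h, add_zero]

lemma bc_eq_card (v : ℕ → Fin n → NNReal) (i : Fin n) (T : ℕ) :
    (stSeq n α v T).bc i
      = ((bundle n (Falg n α) v i T).filter fun t => Real.sqrt (α i) < (v t i : ℝ)).card := by
  induction T with
  | zero => simp [stSeq, St.init, bundle]
  | succ T ih =>
      rw [bundle_succ, alloc_Falg]
      show (stSeq n α v T).bc i + _ = _
      by_cases h : target n α (stSeq n α v T) (v T) = i
      · rw [if_pos h]
        by_cases hb : Real.sqrt (α i) < (v T i : ℝ)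
        · rw [if_pos ⟨h.symm, (mem_bigS n α).2 hb⟩, Finset.filter_insert, if_pos hb,
            Finset.card_insert_of_notMem (by
              intro hx
              exact not_mem_bundle_self n (Falg n α) v i T (Finset.mem_of_mem_filter _ hx)), ih]
        · rw [if_neg (fun hh => hb ((mem_bigS n α).1 hh.2)), Finset.filter_insert, if_neg hb, ih,
            add_zero]
      · rw [if_neg (fun hh => h hh.1.symm), if_neg h, ih, add_zero]

lemma bc_le_mc (v : ℕ → Fin n → NNReal) (i : Fin n) (T : ℕ) :
    (stSeq n α v T).bc i ≤ (stSeq n α v T).mc i := by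
  rw [bc_eq_card, mc_eq_card]
  exact Finset.card_filter_le _ _

lemma kc_le_T (v : ℕ → Fin n → NNReal) (i : Fin n) (T : ℕ) :
    (stSeq n α v T).kc i ≤ T := by
  rw [kc_eq_card]
  exact le_trans (Finset.card_filter_le _ _) (by simp)

lemma mc_le_succ (v : ℕ → Fin n → NNReal) (i : Fin n) (T : ℕ) :
    (stSeq n α v T).mc i ≤ (stSeq n α v (T+1)).mc i := by
  show (stSeq n α v T).mc i ≤ (stSeq n α v T).mc i + _
  exact Nat.le_add_right _ _

lemma bc_le_succ (v : ℕ → Fin n → NNReal) (i : Fin n) (T : ℕ) :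
    (stSeq n α v T).bc i ≤ (stSeq n α v (T+1)).bc i := by
  show (stSeq n α v T).bc i ≤ (stSeq n α v T).bc i + _
  exact Nat.le_add_right _ _

lemma kc_le_succ (v : ℕ → Fin n → NNReal) (i : Fin n) (T : ℕ) :
    (stSeq n α v T).kc i ≤ (stSeq n α v (T+1)).kc i := by
  show (stSeq n α v T).kc i ≤ (stSeq n α v T).kc i + _
  exact Nat.le_add_right _ _

lemma kc_succ_le (v : ℕ → Fin n → NNReal) (i : Fin n) (T : ℕ) :
    (stSeq n α v (T+1)).kc i ≤ (stSeq n α v T).kc i + 1 := by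
  show (stSeq n α v T).kc i + _ ≤ _
  split <;> omega

lemma mc_mono (v : ℕ → Fin n → NNReal) (i : Fin n) {T T' : ℕ} (h : T ≤ T') :
    (stSeq n α v T).mc i ≤ (stSeq n α v T').mc i := by
  induction T', h using Nat.le_induction with
  | base => exact le_refl _
  | succ T' hT ih => exact ih.trans (mc_le_succ n α v i T')

lemma bc_mono (v : ℕ → Fin n → NNReal) (i : Fin n) {T T' : ℕ} (h : T ≤ T') :
    (stSeq n α v T).bc i ≤ (stSeq n α v T').bc i := by
  induction T', h using Nat.le_induction with
  | base => exact le_refl _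
  | succ T' hT ih => exact ih.trans (bc_le_succ n α v i T')

lemma kc_mono (v : ℕ → Fin n → NNReal) (i : Fin n) {T T' : ℕ} (h : T ≤ T') :
    (stSeq n α v T).kc i ≤ (stSeq n α v T').kc i := by
  induction T', h using Nat.le_induction with
  | base => exact le_refl _
  | succ T' hT ih => exact ih.trans (kc_le_succ n α v i T')

end S17

namespace S17
variable (n : ℕ) (α : Fin n → ℝ) [NeZero n]

lemma sum_mc (v : ℕ → Fin n → NNReal) (T : ℕ) :
    ∑ i, (stSeq n α v T).mc i = T := by
  induction T with
  | zero => simp [stSeq, St.init]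
  | succ T ih =>
      show (∑ i, ((stSeq n α v T).mc i + if i = target n α (stSeq n α v T) (v T) then 1 else 0)) = T + 1
      rw [Finset.sum_add_distrib, ih, Finset.sum_ite_eq' univ _ (fun _ => 1)]
      simp

lemma unserved_nonempty (v : ℕ → Fin n → NNReal) {T : ℕ} (hT : T < n) :
    (unservedSet n (stSeq n α v T)).Nonempty := by
  by_contra h
  rw [Finset.not_nonempty_iff_eq_empty] at h
  have h1 : ∀ i, 1 ≤ (stSeq n α v T).mc i := by
    intro i
    by_contra hi
    have : i ∈ unservedSet n (stSeq n α v T) := by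
      rw [unservedSet, mem_filter]
      exact ⟨mem_univ _, by omega⟩
    simp [h] at this
  have : (n : ℕ) ≤ ∑ i, (stSeq n α v T).mc i := by
    calc (n : ℕ) = ∑ _i : Fin n, 1 := by simp
    _ ≤ _ := Finset.sum_le_sum (fun i _ => h1 i)
  rw [sum_mc] at this
  omega

/-- during the phase, the target is an unserved agent -/
lemma target_unserved (v : ℕ → Fin n → NNReal) {T : ℕ} (hT : T < n) :
    target n α (stSeq n α v T) (v T) ∈ unservedSet n (stSeq n α v T) := by
  rw [target, if_pos (by rw [time_stSeq]; exact hT)]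
  by_cases h : (bigS n α (v T) ∩ unservedSet n (stSeq n α v T)).Nonempty
  · rw [if_pos h]
    exact Finset.mem_of_mem_inter_right (argminBy_mem n _ h).1
  · rw [if_neg h]
    exact (argminBy_mem n _ (unserved_nonempty n α v hT)).1

lemma mc_zero_of_phase (v : ℕ → Fin n → NNReal) {T : ℕ} (hT : T ≤ n) (i : Fin n)
    (h : (stSeq n α v T).mc i = 0) {T' : ℕ} (hT' : T' ≤ T) : (stSeq n α v T').mc i = 0 :=
  Nat.le_zero.1 (h ▸ mc_mono n α v i hT')

lemma card_unserved (v : ℕ → Fin n → NNReal) {T : ℕ} (hT : T ≤ n) :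
    (unservedSet n (stSeq n α v T)).card = n - T := by
  induction T with
  | zero => simp [unservedSet, stSeq, St.init]
  | succ T ih =>
      have hTn : T < n := hT
      have hw := target_unserved n α v hTn
      have hsub : unservedSet n (stSeq n α v (T+1)) =
          (unservedSet n (stSeq n α v T)).erase (target n α (stSeq n α v T) (v T)) := by
        ext i
        rw [unservedSet, mem_filter, Finset.mem_erase, unservedSet, mem_filter]
        constructor
        · intro ⟨_, hi⟩
          have hmc : (stSeq n α v T).mc i + (if i = target n α (stSeq n α v T) (v T) then 1 else 0) = 0 := hi
          constructor
          · intro he; rw [if_pos he] at hmc; omega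
          · refine ⟨mem_univ _, ?_⟩
            by_cases he : i = target n α (stSeq n α v T) (v T)
            · rw [if_pos he] at hmc; omega
            · rw [if_neg he] at hmc; omega
        · intro ⟨hne, _, hi⟩
          refine ⟨mem_univ _, ?_⟩
          show (stSeq n α v T).mc i + _ = 0
          rw [if_neg hne, hi]
      rw [hsub, Finset.card_erase_of_mem hw, ih (le_of_lt hTn)]
      omega

lemma matching (v : ℕ → Fin n → NNReal) (i : Fin n) {T : ℕ} (hT : n ≤ T) :
    1 ≤ (stSeq n α v T).mc i := by
  have h0 : (unservedSet n (stSeq n α v n)).card = 0 := by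
    rw [card_unserved n α v (le_refl n)]; omega
  rw [Finset.card_eq_zero] at h0
  have : i ∉ unservedSet n (stSeq n α v n) := by rw [h0]; exact Finset.notMem_empty i
  rw [unservedSet, mem_filter] at this
  have h1 : 1 ≤ (stSeq n α v n).mc i := by
    by_contra h; exact this ⟨mem_univ _, by omega⟩
  exact le_trans h1 (mc_mono n α v i hT)

/-- number of credited agents -/
def CC (v : ℕ → Fin n → NNReal) (T : ℕ) : ℕ :=
  (univ.filter fun x => 0 < (stSeq n α v T).bc x).card

lemma CC_mono (v : ℕ → Fin n → NNReal) {T T' : ℕ} (h : T ≤ T') :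
    CC n α v T ≤ CC n α v T' := by
  apply Finset.card_le_card
  intro x hx
  rw [mem_filter] at hx ⊢
  exact ⟨mem_univ _, lt_of_lt_of_le hx.2 (bc_mono n α v x h)⟩

lemma CC_succ_le (v : ℕ → Fin n → NNReal) (T : ℕ) :
    CC n α v (T+1) ≤ CC n α v T + 1 := by
  have : (univ.filter fun x => 0 < (stSeq n α v (T+1)).bc x) ⊆
      insert (target n α (stSeq n α v T) (v T)) (univ.filter fun x => 0 < (stSeq n α v T).bc x) := by
    intro x hx
    rw [mem_filter] at hx
    rw [Finset.mem_insert]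
    by_cases he : x = target n α (stSeq n α v T) (v T)
    · exact Or.inl he
    · right
      rw [mem_filter]
      refine ⟨mem_univ _, ?_⟩
      have hb : (stSeq n α v (T+1)).bc x
          = (stSeq n α v T).bc x + if x = target n α (stSeq n α v T) (v T) ∧ x ∈ bigS n α (v T) then 1 else 0 := rfl
      rw [hb, if_neg (fun hh => he hh.1)] at hx
      omega
  calc CC n α v (T+1) ≤ _ := Finset.card_le_card this
  _ ≤ _ := by
      rw [CC]; exact Finset.card_insert_le _ _

lemma CC_le_served (v : ℕ → Fin n → NNReal) (T : ℕ) (hT : T ≤ n) :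
    CC n α v T ≤ T := by
  have h1 : (univ.filter fun x => 0 < (stSeq n α v T).bc x) ⊆
      (univ.filter fun x => ¬ (stSeq n α v T).mc x = 0) := by
    intro x hx
    rw [mem_filter] at hx ⊢
    refine ⟨mem_univ _, ?_⟩
    have := bc_le_mc n α v x T
    omega
  have h2 := Finset.card_le_card h1
  have h3 : (univ.filter fun x => ¬ (stSeq n α v T).mc x = 0).card = n - (n - T) := by
    have := card_unserved n α v hT
    rw [unservedSet] at this
    rw [Finset.filter_not, Finset.card_sdiff_of_subset (Finset.filter_subset _ _), this, Finset.card_univ,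
      Fintype.card_fin]
  rw [CC]
  omega

/-- key phase drain bound for unserved virgins -/
lemma kc_le_CC (v : ℕ → Fin n → NNReal) {T : ℕ} (hT : T ≤ n) (i : Fin n)
    (hm : (stSeq n α v T).mc i = 0) : (stSeq n α v T).kc i ≤ CC n α v T := by
  induction T with
  | zero => simp [stSeq, St.init]
  | succ T ih =>
      have hTn : T < n := hT
      have hm' : (stSeq n α v T).mc i = 0 :=
        mc_zero_of_phase n α v hT i hm (Nat.le_succ T)
      have hiu : i ∈ unservedSet n (stSeq n α v T) := by
        rw [unservedSet, mem_filter]; exact ⟨mem_univ _, hm'⟩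
      have hk : (stSeq n α v (T+1)).kc i
          = (stSeq n α v T).kc i + if i ∈ bigS n α (v T) then 1 else 0 := rfl
      by_cases hbig : i ∈ bigS n α (v T)
      · -- i is drained; the slot credits a new agent
        have hne : (bigS n α (v T) ∩ unservedSet n (stSeq n α v T)).Nonempty :=
          ⟨i, Finset.mem_inter.2 ⟨hbig, hiu⟩⟩
        set w := target n α (stSeq n α v T) (v T) with hwdef
        have hw : w ∈ bigS n α (v T) ∩ unservedSet n (stSeq n α v T) := by
          rw [hwdef, target, if_pos (by rw [time_stSeq]; exact hTn), if_pos hne]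
          exact (argminBy_mem n _ hne).1
        rw [Finset.mem_inter] at hw
        have hwb : (stSeq n α v (T+1)).bc w = (stSeq n α v T).bc w + 1 := by
          show (stSeq n α v T).bc w + (if _ ∧ _ then 1 else 0) = _
          rw [if_pos ⟨rfl, hw.1⟩]
        have hwb0 : (stSeq n α v T).bc w = 0 := by
          have h1 := bc_le_mc n α v w T
          have h2 : (stSeq n α v T).mc w = 0 := by
            have := hw.2; rw [unservedSet, mem_filter] at this; exact this.2
          omega
        -- CC strictly increases
        have hCC : CC n α v T + 1 ≤ CC n α v (T+1) := by
          have hstrict : (univ.filter fun x => 0 < (stSeq n α v T).bc x) ⊂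
              (univ.filter fun x => 0 < (stSeq n α v (T+1)).bc x) := by
            constructor
            · intro x hx
              rw [mem_filter] at hx ⊢
              exact ⟨mem_univ _, lt_of_lt_of_le hx.2 (bc_le_succ n α v x T)⟩
            · intro hsub
              have := hsub (by rw [mem_filter]; exact ⟨mem_univ _, by omega⟩ :
                w ∈ univ.filter fun x => 0 < (stSeq n α v (T+1)).bc x)
              rw [mem_filter] at this
              omega
          exact Finset.card_lt_card hstrict
        have hii : i ≠ w := by
          intro he
          have : (stSeq n α v (T+1)).mc i = (stSeq n α v T).mc i + 1 := by
            show (stSeq n α v T).mc i + (if _ then 1 else 0) = _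
            rw [if_pos (hwdef ▸ he)]
          omega
        rw [hk, if_pos hbig]
        have := ih (le_of_lt hTn) hm'
        omega
      · rw [hk, if_neg hbig]
        exact le_trans (ih (le_of_lt hTn) hm') (CC_mono n α v (Nat.le_succ T))

end S17

namespace S17
variable (n : ℕ) (α : Fin n → ℝ) [NeZero n]

/-- the big-slack of a state (no pending good) -/
def rSt' (s : St n) (i : Fin n) : ℤ :=
  if s.bc i = 0 then (n : ℤ) - 1 - s.kc i else (Dn n : ℤ) * s.bc i - s.kc i

lemma n_le_Dn (hn : 1 ≤ n) : n ≤ Dn n := by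
  rw [Dn]
  rcases Nat.lt_or_ge n 2 with h | h
  · interval_cases n <;> simp
  · have : n * 1 ≤ n * (2*n - 1) := Nat.mul_le_mul_left n (by omega)
    omega
lemma two_n_sub_one_le_Dn (hn : 1 ≤ n) : 2*n - 1 ≤ Dn n := by
  rw [Dn]
  have : 1 * (2*n-1) ≤ n * (2*n - 1) := Nat.mul_le_mul_right _ (by omega)
  omega
lemma Dn_le_4n : Dn n ≤ 4 * n := min_le_left _ _
lemma Dn_le_n2n1 : Dn n ≤ n * (2*n - 1) := min_le_right _ _

lemma kc_diff_le (v : ℕ → Fin n → NNReal) (i : Fin n) {T T' : ℕ} (h : T ≤ T') :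
    (stSeq n α v T').kc i ≤ (stSeq n α v T).kc i + (T' - T) := by
  induction T', h using Nat.le_induction with
  | base => simp
  | succ T' hT ih =>
      have := kc_succ_le n α v i T'
      omega

lemma CC_diff_le (v : ℕ → Fin n → NNReal) {T T' : ℕ} (h : T ≤ T') :
    CC n α v T' ≤ CC n α v T + (T' - T) := by
  induction T', h using Nat.le_induction with
  | base => simp
  | succ T' hT ih =>
      have := CC_succ_le n α v T'
      omega

def pSlot (v : ℕ → Fin n → NNReal) (i : Fin n) : ℕ :=
  sInf {t | 0 < (stSeq n α v (t+1)).mc i}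

lemma pSlot_spec (v : ℕ → Fin n → NNReal) (i : Fin n) {T : ℕ}
    (hmc : 1 ≤ (stSeq n α v T).mc i) :
    pSlot n α v i + 1 ≤ T ∧ (stSeq n α v (pSlot n α v i)).mc i = 0 ∧
      target n α (stSeq n α v (pSlot n α v i)) (v (pSlot n α v i)) = i := by
  have hT1 : 1 ≤ T := by
    by_contra h
    have : T = 0 := by omega
    subst this
    simp [stSeq, St.init] at hmc
  have hne : {t | 0 < (stSeq n α v (t+1)).mc i}.Nonempty := by
    refine ⟨T - 1, ?_⟩
    show 0 < (stSeq n α v (T - 1 + 1)).mc i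
    rw [Nat.sub_add_cancel hT1]
    omega
  simp only [pSlot]
  set p := sInf {t | 0 < (stSeq n α v (t+1)).mc i} with hp
  have hmem : 0 < (stSeq n α v (p+1)).mc i := Nat.sInf_mem hne
  have hmin : ∀ t, t < p → ¬ (0 < (stSeq n α v (t+1)).mc i) := by
    intro t ht hcon
    have h1 : p ≤ t := hp ▸ Nat.sInf_le hcon
    omega
  have hzero : (stSeq n α v p).mc i = 0 := by
    rcases Nat.eq_zero_or_pos p with h0 | h0
    · rw [h0]; simp [stSeq, St.init]
    · have := hmin (p - 1) (by omega)
      rw [Nat.sub_add_cancel h0] at this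
      omega
  have htar : target n α (stSeq n α v p) (v p) = i := by
    have hstep : (stSeq n α v (p+1)).mc i
        = (stSeq n α v p).mc i + if i = target n α (stSeq n α v p) (v p) then 1 else 0 := rfl
    by_contra h
    rw [hstep, if_neg (fun hh => h hh.symm), hzero] at hmem
    omega
  refine ⟨?_, hzero, htar⟩
  by_contra h
  have hTp : T ≤ p := by omega
  have := mc_mono n α v i hTp
  omega

lemma bc_zero_earlier (v : ℕ → Fin n → NNReal) (i : Fin n) {T T' : ℕ} (h : T ≤ T')
    (hb : (stSeq n α v T').bc i = 0) : (stSeq n α v T).bc i = 0 :=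
  Nat.le_zero.1 (hb ▸ bc_mono n α v i h)

/-- the main chain bound for a served virgin -/
lemma kc_chain (v : ℕ → Fin n → NNReal) (i : Fin n) {T : ℕ} (hT : T ≤ n)
    (hbc : (stSeq n α v T).bc i = 0) (hmc : 1 ≤ (stSeq n α v T).mc i) :
    pSlot n α v i + 1 ≤ T ∧
    (stSeq n α v T).kc i + pSlot n α v i + 1 ≤ CC n α v (pSlot n α v i) + T ∧
    CC n α v (pSlot n α v i + 1) = CC n α v (pSlot n α v i) := by
  obtain ⟨hpT, hzero, htar⟩ := pSlot_spec n α v i hmc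
  set p := pSlot n α v i with hp
  -- i not big at its serve slot
  have hnotbig : i ∉ bigS n α (v p) := by
    intro hbig
    have hstep : (stSeq n α v (p+1)).bc i
        = (stSeq n α v p).bc i + if i = target n α (stSeq n α v p) (v p) ∧ i ∈ bigS n α (v p) then 1 else 0 := rfl
    have := bc_zero_earlier n α v i hpT hbc
    rw [hstep, if_pos ⟨htar.symm, hbig⟩] at this
    omega
  have hkp1 : (stSeq n α v (p+1)).kc i = (stSeq n α v p).kc i := by
    show (stSeq n α v p).kc i + (if i ∈ bigS n α (v p) then 1 else 0) = _
    rw [if_neg hnotbig, add_zero]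
  have hkcp : (stSeq n α v p).kc i ≤ CC n α v p :=
    kc_le_CC n α v (by omega) i hzero
  have hkT : (stSeq n α v T).kc i ≤ (stSeq n α v (p+1)).kc i + (T - (p+1)) :=
    kc_diff_le n α v i hpT
  have hCCeq : CC n α v (p + 1) = CC n α v p := by
    have hbceq : ∀ x, (stSeq n α v (p+1)).bc x = (stSeq n α v p).bc x := by
      intro x
      show (stSeq n α v p).bc x + (if x = target n α (stSeq n α v p) (v p) ∧ x ∈ bigS n α (v p) then 1 else 0) = _
      rw [if_neg, add_zero]
      intro ⟨hx1, hx2⟩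
      rw [htar] at hx1
      subst hx1
      exact hnotbig hx2
    rw [CC, CC]
    congr 1
    apply Finset.filter_congr
    intro x _
    rw [hbceq]
  exact ⟨hpT, by omega, hCCeq⟩

/-- in-phase big-slack safety -/
lemma rSt_nonneg_phase (v : ℕ → Fin n → NNReal) {T : ℕ} (hT : T ≤ n) (i : Fin n) :
    0 ≤ rSt' n (stSeq n α v T) i := by
  have hn : 1 ≤ n := Nat.one_le_iff_ne_zero.2 (NeZero.ne n)
  rw [rSt']
  by_cases hbc : (stSeq n α v T).bc i = 0
  · rw [if_pos hbc]
    rcases Nat.eq_zero_or_pos ((stSeq n α v T).mc i) with hmc | hmc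
    · -- unserved virgin
      have h1 := kc_le_CC n α v hT i hmc
      have h2 : T < n := by
        rcases Nat.lt_or_ge T n with h | h
        · exact h
        · exfalso
          have := matching n α v i h
          omega
      have h3 := CC_le_served n α v T hT
      have : (stSeq n α v T).kc i ≤ n - 1 := by omega
      have hn1 : (1:ℤ) ≤ n := by exact_mod_cast hn
      push_cast
      omega
    · obtain ⟨hpT, hchain, _⟩ := kc_chain n α v i hT hbc hmc
      have h3 := CC_le_served n α v (pSlot n α v i) (by omega)
      have : (stSeq n α v T).kc i + 1 ≤ T := by omega
      push_cast
      omega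
  · rw [if_neg hbc]
    have h1 : (stSeq n α v T).kc i ≤ T := kc_le_T n α v i T
    have h2 : 1 ≤ (stSeq n α v T).bc i := by omega
    have h3 : (n:ℤ) ≤ Dn n := by exact_mod_cast n_le_Dn n hn
    have h4 : (Dn n : ℤ) * 1 ≤ (Dn n : ℤ) * (stSeq n α v T).bc i := by
      apply mul_le_mul_of_nonneg_left (by exact_mod_cast h2) (by positivity)
    have h5 : ((stSeq n α v T).kc i : ℤ) ≤ T := by exact_mod_cast h1
    have h6 : (T : ℤ) ≤ n := by exact_mod_cast hT
    omega

/-- the ladder invariant -/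
def Ladder (v : ℕ → Fin n → NNReal) (T : ℕ) : Prop :=
  ∀ q : ℤ, -1 ≤ q →
    ((univ.filter fun i => rSt' n (stSeq n α v T) i ≤ q).card : ℤ) ≤ q + 1

/-- the ladder holds at the end of the phase -/
lemma ladder_at_n (v : ℕ → Fin n → NNReal) : Ladder n α v n := by
  have hn : 1 ≤ n := Nat.one_le_iff_ne_zero.2 (NeZero.ne n)
  intro q hq
  rcases le_or_gt ((n:ℤ) - 1) q with hbig | hsmall
  · calc ((univ.filter fun i => rSt' n (stSeq n α v n) i ≤ q).card : ℤ)
        ≤ (univ : Finset (Fin n)).card := by exact_mod_cast Finset.card_le_card (Finset.filter_subset _ _)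
    _ ≤ q + 1 := by rw [Finset.card_univ, Fintype.card_fin]; omega
  · -- q ≤ n - 2 ; members are virgins with kc ≥ m where m = n - 1 - q
    set m : ℕ := (n - 1 - q).toNat with hm
    have hmq : (m : ℤ) = (n:ℤ) - 1 - q := by
      rw [hm, Int.toNat_of_nonneg (by omega)]
    have hm1 : 1 ≤ m := by omega
    have hmn : m ≤ n := by omega
    have hsubset : (univ.filter fun i => rSt' n (stSeq n α v n) i ≤ q) ⊆
        (univ.filter fun i => (stSeq n α v n).bc i = 0 ∧ m ≤ (stSeq n α v n).kc i) := by
      intro i hi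
      rw [mem_filter] at hi ⊢
      refine ⟨mem_univ _, ?_⟩
      rw [rSt'] at hi
      by_cases hbc : (stSeq n α v n).bc i = 0
      · rw [if_pos hbc] at hi
        refine ⟨hbc, ?_⟩
        have := hi.2
        omega
      · exfalso
        rw [if_neg hbc] at hi
        have h1 : (stSeq n α v n).kc i ≤ n := kc_le_T n α v i n
        have h2 : 1 ≤ (stSeq n α v n).bc i := by omega
        have h3 : (n:ℤ) + (n:ℤ) - 1 ≤ Dn n := by
          have := two_n_sub_one_le_Dn n hn
          have : ((2*n - 1 : ℕ) : ℤ) ≤ Dn n := by exact_mod_cast this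
          push_cast at this
          omega
        have h4 : (Dn n : ℤ) * 1 ≤ (Dn n : ℤ) * (stSeq n α v n).bc i :=
          mul_le_mul_of_nonneg_left (by exact_mod_cast h2) (by positivity)
        have h5 : ((stSeq n α v n).kc i : ℤ) ≤ n := by exact_mod_cast h1
        have := hi.2
        omega
    -- injective map into [1, n-m]
    have hinj : ∀ i ∈ (univ.filter fun i => (stSeq n α v n).bc i = 0 ∧ m ≤ (stSeq n α v n).kc i),
        (pSlot n α v i + 1 - CC n α v (pSlot n α v i)) ∈ Finset.Icc 1 (n - m) ∧
        True := by
      intro i hi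
      rw [mem_filter] at hi
      obtain ⟨_, hbc, hkc⟩ := hi
      have hmc : 1 ≤ (stSeq n α v n).mc i := matching n α v i (le_refl n)
      obtain ⟨hpT, hchain, _⟩ := kc_chain n α v i (le_refl n) hbc hmc
      have hCCp := CC_le_served n α v (pSlot n α v i) (by omega)
      constructor
      · rw [Finset.mem_Icc]
        omega
      · trivial
    have hcard : (univ.filter fun i => (stSeq n α v n).bc i = 0 ∧ m ≤ (stSeq n α v n).kc i).card
        ≤ (Finset.Icc 1 (n - m)).card := by
      apply Finset.card_le_card_of_injOn
        (fun i => pSlot n α v i + 1 - CC n α v (pSlot n α v i))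
      · intro i hi
        exact (hinj i hi).1
      · intro i hi j hj hij
        rw [Finset.mem_coe, mem_filter] at hi hj
        by_contra hne
        have hmci : 1 ≤ (stSeq n α v n).mc i := matching n α v i (le_refl n)
        have hmcj : 1 ≤ (stSeq n α v n).mc j := matching n α v j (le_refl n)
        obtain ⟨hpTi, hchaini, hCCi⟩ := kc_chain n α v i (le_refl n) hi.2.1 hmci
        obtain ⟨hpTj, hchainj, hCCj⟩ := kc_chain n α v j (le_refl n) hj.2.1 hmcj
        obtain ⟨_, hzi, hti⟩ := pSlot_spec n α v i hmci
        obtain ⟨_, hzj, htj⟩ := pSlot_spec n α v j hmcj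
        have hpne : pSlot n α v i ≠ pSlot n α v j := by
          intro he
          rw [he] at hti
          rw [hti] at htj
          exact hne htj
        -- wlog pi < pj, derive qi < qj contradiction with hij
        dsimp only at hij
        have key : ∀ pa pb ca cb : ℕ, pa < pb → cb ≤ ca + (pb - (pa+1)) → ca ≤ pa →
            pa + 1 - ca < pb + 1 - cb := by
          intro pa pb ca cb h1 h2 h3
          omega
        rcases Nat.lt_or_ge (pSlot n α v i) (pSlot n α v j) with hlt | hge
        · have h1 : CC n α v (pSlot n α v j) ≤ CC n α v (pSlot n α v i + 1)
              + (pSlot n α v j - (pSlot n α v i + 1)) := CC_diff_le n α v (by omega)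
          rw [hCCi] at h1
          have h3 : CC n α v (pSlot n α v i) ≤ pSlot n α v i :=
            CC_le_served n α v _ (by omega)
          have := key (pSlot n α v i) (pSlot n α v j) _ _ hlt h1 h3
          omega
        · have hlt : pSlot n α v j < pSlot n α v i := by omega
          have h1 : CC n α v (pSlot n α v i) ≤ CC n α v (pSlot n α v j + 1)
              + (pSlot n α v i - (pSlot n α v j + 1)) := CC_diff_le n α v (by omega)
          rw [hCCj] at h1
          have h3 : CC n α v (pSlot n α v j) ≤ pSlot n α v j :=
            CC_le_served n α v _ (by omega)
          have := key (pSlot n α v j) (pSlot n α v i) _ _ hlt h1 h3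
          omega
    have hIcc : (Finset.Icc 1 (n - m)).card = n - m := by
      rw [Nat.card_Icc]
      omega
    have := Finset.card_le_card hsubset
    have hfin : ((univ.filter fun i => rSt' n (stSeq n α v n) i ≤ q).card : ℤ) ≤ ((n - m : ℕ) : ℤ) := by
      exact_mod_cast le_trans this (le_trans hcard (le_of_eq hIcc))
    have : ((n - m : ℕ) : ℤ) = (n : ℤ) - m := by
      rw [Nat.cast_sub hmn]
    omega

end S17

namespace S17
variable (n : ℕ) (α : Fin n → ℝ) [NeZero n]

lemma rt_eq (s : St n) (g : Fin n → NNReal) (i : Fin n) :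
    rt n α s g i = rSt' n s i - (if i ∈ bigS n α g then 1 else 0) := by
  rw [rt, rSt', knew]
  by_cases h : i ∈ bigS n α g <;> by_cases hb : s.bc i = 0 <;>
    simp [h, hb] <;> push_cast <;> ring

lemma rSt_step_ne (s : St n) (g : Fin n → NNReal) {i : Fin n}
    (h : i ≠ target n α s g) : rSt' n (step n α s g) i = rt n α s g i := by
  have hbc : (step n α s g).bc i = s.bc i := by
    show s.bc i + _ = s.bc i
    rw [if_neg (fun hh => h hh.1), add_zero]
  have hkc : (step n α s g).kc i = knew n α s g i := rfl
  rw [rSt', rt, hbc, hkc]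

lemma rSt_step_target_ge (s : St n) (g : Fin n → NNReal) :
    rt n α s g (target n α s g) ≤ rSt' n (step n α s g) (target n α s g) := by
  have hn : 1 ≤ n := Nat.one_le_iff_ne_zero.2 (NeZero.ne n)
  have hDn : (n : ℤ) ≤ Dn n := by exact_mod_cast n_le_Dn n hn
  set w := target n α s g with hw
  have hkc : (step n α s g).kc w = knew n α s g w := rfl
  by_cases hb : w ∈ bigS n α g
  · have hbc : (step n α s g).bc w = s.bc w + 1 := by
      show s.bc w + _ = _
      rw [if_pos ⟨rfl, hb⟩]
    by_cases h0 : s.bc w = 0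
    · have hL : rt n α s g w = (n:ℤ) - 1 - knew n α s g w := by rw [rt, if_pos h0]
      have hR : rSt' n (step n α s g) w = (Dn n:ℤ) * ((s.bc w : ℤ) + 1) - knew n α s g w := by
        rw [rSt', hbc, if_neg (by omega), hkc]
        push_cast
        ring
      rw [hL, hR, h0]
      push_cast
      omega
    · have hL : rt n α s g w = (Dn n:ℤ) * s.bc w - knew n α s g w := by rw [rt, if_neg h0]
      have hR : rSt' n (step n α s g) w = (Dn n:ℤ) * (s.bc w : ℤ) + (Dn n : ℤ)
          - knew n α s g w := by
        rw [rSt', hbc, if_neg (by omega), hkc]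
        push_cast
        ring
      rw [hL, hR]
      omega
  · have hbc : (step n α s g).bc w = s.bc w := by
      show s.bc w + _ = _
      rw [if_neg (fun hh => hb hh.2), add_zero]
    exact le_of_eq (by rw [rSt', rt, hbc, hkc])

lemma rSt_ge_sub_one (s : St n) (g : Fin n → NNReal) (i : Fin n) :
    rSt' n s i - 1 ≤ rt n α s g i := by
  rw [rt_eq]
  split <;> omega

lemma rt_le_rSt (s : St n) (g : Fin n → NNReal) (i : Fin n) :
    rt n α s g i ≤ rSt' n s i := by
  rw [rt_eq]
  split <;> omega

lemma argminR_rt_min (g : Fin n → NNReal) (s : St n) {A : Finset (Fin n)} (hA : A.Nonempty)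
    (i : Fin n) (hi : i ∈ A) :
    rt n α s g (argminBy n (keyR n α s g) A) ≤ rt n α s g i := by
  obtain ⟨hmem, hmin⟩ := argminBy_mem n (keyR n α s g) hA
  have h := hmin i hi
  rw [keyR, keyR] at h
  set w := argminBy n (keyR n α s g) A
  by_contra hcon
  push_neg at hcon
  have h1 : rt n α s g i + 1 ≤ rt n α s g w := by omega
  have h2 : ((w : ℕ) : ℤ) < n := by exact_mod_cast w.2
  have h3 : (0:ℤ) ≤ ((i : ℕ) : ℤ) := by positivity
  have h4 : ((i : ℕ) : ℤ) < n := by exact_mod_cast i.2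
  have h5 : (rt n α s g i + 1) * n ≤ rt n α s g w * n :=
    mul_le_mul_of_nonneg_right h1 (by positivity)
  nlinarith

lemma ladder_step (v : ℕ → Fin n → NNReal) {T : ℕ} (hT : n ≤ T)
    (hL : Ladder n α v T) : Ladder n α v (T+1) := by
  have hn : 1 ≤ n := Nat.one_le_iff_ne_zero.2 (NeZero.ne n)
  have hDn : (n : ℤ) ≤ Dn n := by exact_mod_cast n_le_Dn n hn
  have hDn2 : (n : ℤ) + (n : ℤ) - 1 ≤ Dn n := by
    have h' := two_n_sub_one_le_Dn n hn
    have h'' : ((2*n - 1 : ℕ) : ℤ) ≤ Dn n := by exact_mod_cast h'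
    rw [Nat.cast_sub (by omega : 1 ≤ 2*n)] at h''
    push_cast at h''
    omega
  have hrpos : ∀ i, 0 ≤ rSt' n (stSeq n α v T) i := by
    intro i
    by_contra hcon
    have h1 := hL (-1) (le_refl _)
    have h2 : i ∈ univ.filter fun i => rSt' n (stSeq n α v T) i ≤ -1 := by
      rw [mem_filter]; exact ⟨mem_univ _, by omega⟩
    have h3 : (1:ℤ) ≤ ((univ.filter fun i => rSt' n (stSeq n α v T) i ≤ -1).card : ℤ) := by
      exact_mod_cast Finset.card_pos.2 ⟨i, h2⟩
    omega
  set s := stSeq n α v T with hs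
  set g := v T with hg
  have hpost : ¬ s.time < n := by rw [hs, time_stSeq]; omega
  intro q hq
  rcases le_or_gt ((n:ℤ) - 1) q with hbig | hsmall
  · calc ((univ.filter fun i => rSt' n (stSeq n α v (T+1)) i ≤ q).card : ℤ)
        ≤ ((univ : Finset (Fin n)).card : ℤ) := by
          exact_mod_cast Finset.card_le_card (Finset.filter_subset _ _)
    _ ≤ q + 1 := by rw [Finset.card_univ, Fintype.card_fin]; omega
  -- q ≤ n - 2
  have hstep : stSeq n α v (T+1) = step n α s g := rfl
  by_cases hviol : violated n α s g
  · -- trigger branch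
    have hSne : (bigS n α g).Nonempty := by
      obtain ⟨q', hq', hcard⟩ := hviol
      have h1 := hL q' hq'
      rw [← hs] at h1
      have h2 : ¬ (univ.filter fun i => rt n α s g i ≤ q') ⊆
          (univ.filter fun i => rSt' n s i ≤ q') := by
        intro hsub
        have h3 : ((univ.filter fun i => rt n α s g i ≤ q').card : ℤ)
            ≤ ((univ.filter fun i => rSt' n s i ≤ q').card : ℤ) := by
          exact_mod_cast Finset.card_le_card hsub
        omega
      rw [Finset.not_subset] at h2
      obtain ⟨i, hi1, hi2⟩ := h2
      rw [mem_filter] at hi1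
      have hi3 : ¬ rSt' n s i ≤ q' := by
        intro hcon
        exact hi2 (mem_filter.2 ⟨mem_univ _, hcon⟩)
      have := rt_eq n α s g i
      refine ⟨i, ?_⟩
      by_contra hbigi
      rw [if_neg hbigi] at this
      omega
    have htar : target n α s g = argminBy n (keyR n α s g) (bigS n α g) := by
      rw [target, if_neg hpost, if_pos hviol]
    have hwmem : target n α s g ∈ bigS n α g := by
      rw [htar]
      exact (argminBy_mem n _ hSne).1
    have hknew : knew n α s g (target n α s g) = s.kc (target n α s g) + 1 := by
      rw [knew, if_pos hwmem]
    -- the new slack of the target is large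
    have hwnew : (n:ℤ) - 1 ≤ rSt' n (step n α s g) (target n α s g) := by
      have hkc : (step n α s g).kc (target n α s g) = knew n α s g (target n α s g) := rfl
      by_cases h0 : s.bc (target n α s g) = 0
      · have hbc : (step n α s g).bc (target n α s g) = 1 := by
          show s.bc _ + _ = 1
          rw [if_pos ⟨rfl, hwmem⟩, h0]
        have hkcw : (s.kc (target n α s g) : ℤ) ≤ (n:ℤ) - 1 := by
          have := hrpos (target n α s g)
          rw [rSt', if_pos h0] at this
          omega
        rw [rSt', hbc, if_neg one_ne_zero, hkc, hknew]
        push_cast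
        omega
      · have hbc : (step n α s g).bc (target n α s g) = s.bc (target n α s g) + 1 := by
          show s.bc _ + _ = _
          rw [if_pos ⟨rfl, hwmem⟩]
        have h3 : 0 ≤ (Dn n:ℤ) * s.bc (target n α s g) - s.kc (target n α s g) := by
          have := hrpos (target n α s g)
          rw [rSt', if_neg h0] at this
          exact this
        have hexp : ((Dn n : ℤ)) * ((s.bc (target n α s g) : ℤ) + 1)
            = (Dn n:ℤ) * s.bc (target n α s g) + Dn n := by ring
        rw [rSt', hbc, if_neg (by omega), hkc, hknew]
        push_cast
        rw [hexp]
        omega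
    by_cases hcase : rt n α s g (target n α s g) ≤ q
    · -- the target is in the low set and is removed from it
      have hsub : (univ.filter fun i => rSt' n (stSeq n α v (T+1)) i ≤ q) ⊆
          (univ.filter fun i => rt n α s g i ≤ q).erase (target n α s g) := by
        intro i hi
        rw [mem_filter] at hi
        rw [Finset.mem_erase, mem_filter]
        have hiw : i ≠ target n α s g := by
          intro he
          rw [hstep, he] at hi
          have := hi.2
          omega
        refine ⟨hiw, mem_univ _, ?_⟩
        rw [hstep, rSt_step_ne n α s g hiw] at hi
        exact hi.2
      have h1 : (univ.filter fun i => rt n α s g i ≤ q) ⊆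
          (univ.filter fun i => rSt' n s i ≤ q + 1) := by
        intro i hi
        rw [mem_filter] at hi ⊢
        have := rSt_ge_sub_one n α s g i
        exact ⟨mem_univ _, by omega⟩
      have h2 := hL (q+1) (by omega)
      rw [← hs] at h2
      have h3 : ((univ.filter fun i => rt n α s g i ≤ q).card : ℤ) ≤ q + 2 := by
        have hcc : ((univ.filter fun i => rt n α s g i ≤ q).card : ℤ)
            ≤ ((univ.filter fun i => rSt' n s i ≤ q + 1).card : ℤ) := by
          exact_mod_cast Finset.card_le_card h1
        omega
      have hwin : target n α s g ∈ (univ.filter fun i => rt n α s g i ≤ q) :=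
        mem_filter.2 ⟨mem_univ _, hcase⟩
      have h4 := Finset.card_le_card hsub
      rw [Finset.card_erase_of_mem hwin] at h4
      have h5 : 1 ≤ (univ.filter fun i => rt n α s g i ≤ q).card :=
        Finset.card_pos.2 ⟨_, hwin⟩
      have h6 : ((univ.filter fun i => rSt' n (stSeq n α v (T+1)) i ≤ q).card : ℤ)
          ≤ ((univ.filter fun i => rt n α s g i ≤ q).card : ℤ) - 1 := by
        have h7 : ((univ.filter fun i => rSt' n (stSeq n α v (T+1)) i ≤ q).card : ℤ)
            ≤ (((univ.filter fun i => rt n α s g i ≤ q).card - 1 : ℕ) : ℤ) := by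
          exact_mod_cast h4
        push_cast [h5] at h7
        omega
      omega
    · -- everything in S has slack > q, so the low set is untouched
      have hsub : (univ.filter fun i => rSt' n (stSeq n α v (T+1)) i ≤ q) ⊆
          (univ.filter fun i => rSt' n s i ≤ q) := by
        intro i hi
        rw [mem_filter] at hi ⊢
        refine ⟨mem_univ _, ?_⟩
        by_cases hiw : i = target n α s g
        · exfalso
          rw [hstep, hiw] at hi
          have := hi.2
          omega
        · rw [hstep, rSt_step_ne n α s g hiw] at hi
          have hrti := hi.2
          by_cases hbigi : i ∈ bigS n α g
          · exfalso
            have hmin := argminR_rt_min n α g s hSne i hbigi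
            rw [← htar] at hmin
            omega
          · have := rt_eq n α s g i
            rw [if_neg hbigi] at this
            omega
      have h2 := hL q hq
      rw [← hs] at h2
      calc ((univ.filter fun i => rSt' n (stSeq n α v (T+1)) i ≤ q).card : ℤ)
          ≤ ((univ.filter fun i => rSt' n s i ≤ q).card : ℤ) := by
            exact_mod_cast Finset.card_le_card hsub
      _ ≤ q + 1 := h2
  · -- no trigger: the post-drain sets are all small
    have hnov : ∀ q' : ℤ, -1 ≤ q' →
        ((univ.filter fun i => rt n α s g i ≤ q').card : ℤ) ≤ q' + 1 := by
      intro q' hq'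
      by_contra hcon
      exact hviol ⟨q', hq', by omega⟩
    have hsub : (univ.filter fun i => rSt' n (stSeq n α v (T+1)) i ≤ q) ⊆
        (univ.filter fun i => rt n α s g i ≤ q) := by
      intro i hi
      rw [mem_filter] at hi ⊢
      refine ⟨mem_univ _, ?_⟩
      by_cases hiw : i = target n α s g
      · have h1 := rSt_step_target_ge n α s g
        rw [hstep] at hi
        rw [hiw]
        rw [hiw] at hi
        exact le_trans h1 hi.2
      · rw [hstep, rSt_step_ne n α s g hiw] at hi
        exact hi.2
    calc ((univ.filter fun i => rSt' n (stSeq n α v (T+1)) i ≤ q).card : ℤ)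
        ≤ ((univ.filter fun i => rt n α s g i ≤ q).card : ℤ) := by
          exact_mod_cast Finset.card_le_card hsub
    _ ≤ q + 1 := hnov q hq

lemma ladder_all (v : ℕ → Fin n → NNReal) {T : ℕ} (hT : n ≤ T) : Ladder n α v T := by
  induction T, hT using Nat.le_induction with
  | base => exact ladder_at_n n α v
  | succ T hT ih => exact ladder_step n α v hT ih

/-- the big-slack requirement holds at all times -/
lemma rSt_nonneg (v : ℕ → Fin n → NNReal) (T : ℕ) (i : Fin n) :
    0 ≤ rSt' n (stSeq n α v T) i := by
  rcases le_or_gt T n with h | h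
  · exact rSt_nonneg_phase n α v h i
  · have hL := ladder_all n α v (le_of_lt h)
    by_contra hcon
    have h1 := hL (-1) (le_refl _)
    have h2 : i ∈ univ.filter fun i => rSt' n (stSeq n α v T) i ≤ -1 :=
      mem_filter.2 ⟨mem_univ _, by omega⟩
    have h3 : (1:ℤ) ≤ ((univ.filter fun i => rSt' n (stSeq n α v T) i ≤ -1).card : ℤ) := by
      exact_mod_cast Finset.card_pos.2 ⟨i, h2⟩
    omega

end S17

namespace S17
variable (n : ℕ) (α : Fin n → ℝ) [NeZero n]

lemma Dn_ge (hn : 1 ≤ n) : (4 * (n:ℤ) - 3) ≤ (Dn n : ℤ) := by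
  rcases Nat.lt_or_ge n 2 with h | h
  · have : n = 1 := by omega
    subst this
    simp [Dn]
  · rcases le_total (4*n) (n*(2*n-1)) with hmin | hmin
    · have : Dn n = 4*n := min_eq_left hmin
      rw [this]
      push_cast
      omega
    · have heq : Dn n = n*(2*n-1) := min_eq_right hmin
      rw [heq]
      have hc : ((n*(2*n-1) : ℕ) : ℤ) = (n:ℤ) * (2*(n:ℤ) - 1) := by
        rw [Nat.cast_mul, Nat.cast_sub (by omega)]
        push_cast
        ring
      rw [hc]
      have hn2 : (2:ℤ) ≤ (n:ℤ) := by exact_mod_cast h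
      nlinarith [mul_nonneg (by omega : (0:ℤ) ≤ 2*(n:ℤ) - 3) (by omega : (0:ℤ) ≤ (n:ℤ) - 1)]

lemma rSt_decay_step (v : ℕ → Fin n → NNReal) (T : ℕ) (i : Fin n) :
    rSt' n (stSeq n α v T) i - 1 ≤ rSt' n (stSeq n α v (T+1)) i := by
  have hstep : stSeq n α v (T+1) = step n α (stSeq n α v T) (v T) := rfl
  by_cases h : i = target n α (stSeq n α v T) (v T)
  · rw [hstep, h]
    have h1 := rSt_step_target_ge n α (stSeq n α v T) (v T)
    have h2 := rSt_ge_sub_one n α (stSeq n α v T) (v T) (target n α (stSeq n α v T) (v T))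
    omega
  · rw [hstep, rSt_step_ne n α _ _ h]
    exact rSt_ge_sub_one n α _ _ i

lemma rSt_decay (v : ℕ → Fin n → NNReal) {T T' : ℕ} (h : T ≤ T') (i : Fin n) :
    rSt' n (stSeq n α v T) i - ((T' : ℤ) - T) ≤ rSt' n (stSeq n α v T') i := by
  induction T', h using Nat.le_induction with
  | base => simp
  | succ T' hT ih =>
      have := rSt_decay_step n α v T' i
      push_cast
      push_cast at ih
      omega

lemma argminM_mc_min {s : St n} {A : Finset (Fin n)} (hA : A.Nonempty)
    (i : Fin n) (hi : i ∈ A) :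
    (s.mc (argminBy n (keyM n s) A) : ℤ) ≤ s.mc i := by
  obtain ⟨hmem, hmin⟩ := argminBy_mem n (keyM n s) hA
  have h := hmin i hi
  rw [keyM, keyM] at h
  set w := argminBy n (keyM n s) A
  by_contra hcon
  push_neg at hcon
  have h1 : (s.mc i : ℤ) + 1 ≤ s.mc w := by omega
  have h2 : ((w : ℕ) : ℤ) < n := by exact_mod_cast w.2
  have h3 : (0:ℤ) ≤ ((i : ℕ) : ℤ) := by positivity
  have h4 : ((i : ℕ) : ℤ) < n := by exact_mod_cast i.2
  have h5 : ((s.mc i : ℤ) + 1) * n ≤ (s.mc w : ℤ) * n :=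
    mul_le_mul_of_nonneg_right h1 (by positivity)
  nlinarith

/-- on a violated (post-phase) slot, there is a big agent with small slack -/
lemma viol_low_big (v : ℕ → Fin n → NNReal) {u : ℕ} (hu : n ≤ u)
    (hviol : violated n α (stSeq n α v u) (v u)) :
    ∃ i ∈ bigS n α (v u), rt n α (stSeq n α v u) (v u) i ≤ (n : ℤ) - 2 := by
  obtain ⟨q', hq', hcard⟩ := hviol
  have hL := ladder_all n α v hu
  have h1 := hL q' hq'
  have hqn : q' ≤ (n:ℤ) - 2 := by
    have h2 : ((univ.filter fun i => rt n α (stSeq n α v u) (v u) i ≤ q').card : ℤ)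
        ≤ ((univ : Finset (Fin n)).card : ℤ) := by
      exact_mod_cast Finset.card_le_card (Finset.filter_subset _ _)
    rw [Finset.card_univ, Fintype.card_fin] at h2
    omega
  have h2 : ¬ (univ.filter fun i => rt n α (stSeq n α v u) (v u) i ≤ q') ⊆
      (univ.filter fun i => rSt' n (stSeq n α v u) i ≤ q') := by
    intro hsub
    have h3 : ((univ.filter fun i => rt n α (stSeq n α v u) (v u) i ≤ q').card : ℤ)
        ≤ ((univ.filter fun i => rSt' n (stSeq n α v u) i ≤ q').card : ℤ) := by
      exact_mod_cast Finset.card_le_card hsub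
    omega
  rw [Finset.not_subset] at h2
  obtain ⟨i, hi1, hi2⟩ := h2
  rw [mem_filter] at hi1
  have hi3 : ¬ rSt' n (stSeq n α v u) i ≤ q' := by
    intro hcon
    exact hi2 (mem_filter.2 ⟨mem_univ _, hcon⟩)
  have heq := rt_eq n α (stSeq n α v u) (v u) i
  refine ⟨i, ?_, le_trans hi1.2 hqn⟩
  by_contra hbigi
  rw [if_neg hbigi] at heq
  omega

/-- on a violated (post-phase) slot, the slack of the served agent becomes large -/
lemma trig_new_slack (v : ℕ → Fin n → NNReal) {u : ℕ} (hu : n ≤ u)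
    (hviol : violated n α (stSeq n α v u) (v u)) :
    (Dn n : ℤ) - n ≤ rSt' n (stSeq n α v (u+1)) (target n α (stSeq n α v u) (v u)) := by
  have hn : 1 ≤ n := Nat.one_le_iff_ne_zero.2 (NeZero.ne n)
  set s := stSeq n α v u with hs
  set g := v u with hg
  have hpost : ¬ s.time < n := by rw [hs, time_stSeq]; omega
  obtain ⟨i0, hi0b, _⟩ := viol_low_big n α v hu hviol
  have hSne : (bigS n α g).Nonempty := ⟨i0, hi0b⟩
  have htar : target n α s g = argminBy n (keyR n α s g) (bigS n α g) := by
    rw [target, if_neg hpost, if_pos hviol]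
  have hwmem : target n α s g ∈ bigS n α g := by
    rw [htar]; exact (argminBy_mem n _ hSne).1
  have hknew : knew n α s g (target n α s g) = s.kc (target n α s g) + 1 := by
    rw [knew, if_pos hwmem]
  have hstep : stSeq n α v (u+1) = step n α s g := rfl
  have hkc : (step n α s g).kc (target n α s g) = knew n α s g (target n α s g) := rfl
  have hrpos := rSt_nonneg n α v u (target n α s g)
  rw [← hs] at hrpos
  rw [hstep]
  by_cases h0 : s.bc (target n α s g) = 0
  · have hbc : (step n α s g).bc (target n α s g) = 1 := by
      show s.bc _ + _ = 1
      rw [if_pos ⟨rfl, hwmem⟩, h0]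
    have hkcw : (s.kc (target n α s g) : ℤ) ≤ (n:ℤ) - 1 := by
      rw [rSt', if_pos h0] at hrpos
      omega
    rw [rSt', hbc, if_neg one_ne_zero, hkc, hknew]
    push_cast
    omega
  · have hbc : (step n α s g).bc (target n α s g) = s.bc (target n α s g) + 1 := by
      show s.bc _ + _ = _
      rw [if_pos ⟨rfl, hwmem⟩]
    have h3 : 0 ≤ (Dn n:ℤ) * s.bc (target n α s g) - s.kc (target n α s g) := by
      rw [rSt', if_neg h0] at hrpos
      exact hrpos
    have hexp : ((Dn n : ℤ)) * ((s.bc (target n α s g) : ℤ) + 1)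
        = (Dn n:ℤ) * s.bc (target n α s g) + Dn n := by ring
    have hDn : (n : ℤ) ≤ Dn n := by exact_mod_cast n_le_Dn n hn
    rw [rSt', hbc, if_neg (by omega), hkc, hknew]
    push_cast
    rw [hexp]
    omega

/-- the serve-rate invariant -/
lemma A_inv (v : ℕ → Fin n → NNReal) : ∀ T : ℕ, ∀ i : Fin n,
    T ≤ (2*n - 1) * (stSeq n α v T).mc i + (n - 1) := by
  have hn : 1 ≤ n := Nat.one_le_iff_ne_zero.2 (NeZero.ne n)
  intro T
  induction T using Nat.strong_induction_on with
  | _ T IH =>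
  intro z
  rcases Nat.lt_or_ge T n with hTn | hTn
  · omega
  have hm1 : 1 ≤ (stSeq n α v T).mc z := matching n α v z hTn
  rcases Nat.lt_or_ge T (3*n - 1) with hT3 | hT3
  · -- small T : one serve is enough
    have : (2*n - 1) * 1 ≤ (2*n-1) * (stSeq n α v T).mc z :=
      Nat.mul_le_mul_left _ hm1
    omega
  by_contra hcon
  push_neg at hcon
  -- z was not served at slot T-1 and we are exactly at the edge
  have hT1 : T - 1 < T := by omega
  have hIH1 := IH (T-1) hT1 z
  have hzlast : ¬ (target n α (stSeq n α v (T-1)) (v (T-1)) = z) := by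
    intro he
    have hmc : (stSeq n α v T).mc z = (stSeq n α v (T-1)).mc z + 1 := by
      have hstep : (stSeq n α v (T-1+1)).mc z
          = (stSeq n α v (T-1)).mc z + if z = target n α (stSeq n α v (T-1)) (v (T-1)) then 1 else 0 := rfl
      rw [if_pos he.symm] at hstep
      have : T - 1 + 1 = T := by omega
      rw [this] at hstep
      exact hstep
    have := Nat.mul_le_mul_left (2*n-1) (show (stSeq n α v (T-1)).mc z + 1 ≤ (stSeq n α v T).mc z by omega)
    have hd : (2*n-1) * ((stSeq n α v (T-1)).mc z + 1) = (2*n-1)*(stSeq n α v (T-1)).mc z + (2*n-1) := by ring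
    omega
  have hmceq : (stSeq n α v T).mc z = (stSeq n α v (T-1)).mc z := by
    have hstep : (stSeq n α v (T-1+1)).mc z
        = (stSeq n α v (T-1)).mc z + if z = target n α (stSeq n α v (T-1)) (v (T-1)) then 1 else 0 := rfl
    rw [if_neg (fun hh => hzlast hh.symm)] at hstep
    have h2 : T - 1 + 1 = T := by omega
    rw [h2] at hstep
    omega
  have hprod : (2*n-1) * (stSeq n α v T).mc z = (2*n-1) * (stSeq n α v (T-1)).mc z := by
    rw [hmceq]
  have hE : (2*n-1) * (stSeq n α v T).mc z + n = T := by omega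
  -- z is unserved in the whole window
  have hzuns : ∀ u, T - (2*n-1) ≤ u → u < T → target n α (stSeq n α v u) (v u) ≠ z := by
    intro u hu1 hu2 he
    have hIHu := IH u hu2 z
    have hmc : (stSeq n α v (u+1)).mc z = (stSeq n α v u).mc z + 1 := by
      have hstep : (stSeq n α v (u+1)).mc z
          = (stSeq n α v u).mc z + if z = target n α (stSeq n α v u) (v u) then 1 else 0 := rfl
      rw [if_pos he.symm] at hstep
      exact hstep
    have hmono : (stSeq n α v (u+1)).mc z ≤ (stSeq n α v T).mc z :=
      mc_mono n α v z (by omega)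
    have hkey : (2*n-1) * ((stSeq n α v u).mc z + 1) ≤ (2*n-1) * (stSeq n α v T).mc z :=
      Nat.mul_le_mul_left _ (by omega)
    have hd : (2*n-1) * ((stSeq n α v u).mc z + 1) = (2*n-1)*(stSeq n α v u).mc z + (2*n-1) := by ring
    omega
  -- targets of the window slots
  have hwin_post : ∀ u, T - (2*n-1) ≤ u → n ≤ u := by
    intro u hu
    omega
  -- at most one M-slot per agent
  have hMclaim : ∀ u1 u2, T - (2*n-1) ≤ u1 → u1 < u2 → u2 < T →
      ¬ violated n α (stSeq n α v u1) (v u1) → ¬ violated n α (stSeq n α v u2) (v u2) →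
      target n α (stSeq n α v u1) (v u1) ≠ target n α (stSeq n α v u2) (v u2) := by
    intro u1 u2 hu1 hu12 hu2T hv1 hv2 hfe
    have hpost2 : ¬ (stSeq n α v u2).time < n := by
      rw [time_stSeq]
      have := hwin_post u1 hu1
      omega
    have htar2 : target n α (stSeq n α v u2) (v u2) = argminBy n (keyM n (stSeq n α v u2)) univ := by
      rw [target, if_neg hpost2, if_neg hv2]
    -- f u2 has minimal mc at u2, in particular ≤ mc of z
    have hminz : ((stSeq n α v u2).mc (target n α (stSeq n α v u2) (v u2)) : ℤ) ≤ (stSeq n α v u2).mc z := by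
      rw [htar2]
      exact argminM_mc_min n (Finset.univ_nonempty) z (mem_univ _)
    -- but f u2 = f u1 was served at u1
    have hmcf : (stSeq n α v (u1+1)).mc (target n α (stSeq n α v u1) (v u1)) = (stSeq n α v u1).mc (target n α (stSeq n α v u1) (v u1)) + 1 := by
      have hstep : (stSeq n α v (u1+1)).mc (target n α (stSeq n α v u1) (v u1))
          = (stSeq n α v u1).mc (target n α (stSeq n α v u1) (v u1)) + if target n α (stSeq n α v u1) (v u1) = target n α (stSeq n α v u1) (v u1) then 1 else 0 := rfl
      rw [if_pos rfl] at hstep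
      exact hstep
    have hmono : (stSeq n α v (u1+1)).mc (target n α (stSeq n α v u1) (v u1)) ≤ (stSeq n α v u2).mc (target n α (stSeq n α v u1) (v u1)) :=
      mc_mono n α v _ (by omega)
    have hIHu1 := IH u1 (by omega) (target n α (stSeq n α v u1) (v u1))
    have hmz2 : (stSeq n α v u2).mc z ≤ (stSeq n α v T).mc z := mc_mono n α v z (by omega)
    -- chain in ℕ
    have hfin : ((stSeq n α v u2).mc (target n α (stSeq n α v u1) (v u1)) : ℤ) ≤ (stSeq n α v u2).mc z := by
      rw [hfe]; exact hminz
    have hfin' : (stSeq n α v u2).mc (target n α (stSeq n α v u1) (v u1)) ≤ (stSeq n α v u2).mc z := by exact_mod_cast hfin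
    have hkey : (2*n-1) * ((stSeq n α v u1).mc (target n α (stSeq n α v u1) (v u1)) + 1) ≤ (2*n-1) * (stSeq n α v T).mc z :=
      Nat.mul_le_mul_left _ (by omega)
    have hd : (2*n-1) * ((stSeq n α v u1).mc (target n α (stSeq n α v u1) (v u1)) + 1)
        = (2*n-1)*(stSeq n α v u1).mc (target n α (stSeq n α v u1) (v u1)) + (2*n-1) := by ring
    omega
  -- at most one B-slot per agent
  have hBclaim : ∀ u1 u2, T - (2*n-1) ≤ u1 → u1 < u2 → u2 < T →
      violated n α (stSeq n α v u1) (v u1) → violated n α (stSeq n α v u2) (v u2) →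
      target n α (stSeq n α v u1) (v u1) ≠ target n α (stSeq n α v u2) (v u2) := by
    intro u1 u2 hu1 hu12 hu2T hv1 hv2 hfe
    have hn1 : n ≤ u1 := hwin_post u1 hu1
    have hn2 : n ≤ u2 := by omega
    -- after slot u1 the slack of x := f u1 is at least Dn - n
    have h1 := trig_new_slack n α v hn1 hv1
    -- it decays to u2
    have h2 := rSt_decay n α v (show u1 + 1 ≤ u2 by omega) (target n α (stSeq n α v u1) (v u1))
    -- at u2, x is the argmin over bigS and some big agent has slack ≤ n-2
    obtain ⟨i0, hi0b, hi0r⟩ := viol_low_big n α v hn2 hv2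
    have hpost2 : ¬ (stSeq n α v u2).time < n := by rw [time_stSeq]; omega
    have htar2 : target n α (stSeq n α v u2) (v u2)
        = argminBy n (keyR n α (stSeq n α v u2) (v u2)) (bigS n α (v u2)) := by
      rw [target, if_neg hpost2, if_pos hv2]
    have hmin := argminR_rt_min n α (v u2) (stSeq n α v u2) ⟨i0, hi0b⟩ i0 hi0b
    rw [← htar2, ← hfe] at hmin
    have h3 := rSt_ge_sub_one n α (stSeq n α v u2) (v u2) (target n α (stSeq n α v u1) (v u1))
    have h4 := rt_le_rSt n α (stSeq n α v u2) (v u2) (target n α (stSeq n α v u1) (v u1))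
    have hDn4 := Dn_ge n hn
    have hu12' : ((u2 : ℤ) - (u1 + 1)) ≤ 2*(n:ℤ) - 2 := by
      have : u2 - u1 ≤ (2*n-1) - 1 := by omega
      have h6 : ((u2 - u1 : ℕ) : ℤ) ≤ (((2*n-1) - 1 : ℕ) : ℤ) := by exact_mod_cast this
      rw [Nat.cast_sub (by omega), Nat.cast_sub (by omega), Nat.cast_sub (by omega)] at h6
      push_cast at h6
      omega
    push_cast at h2
    omega
  -- pigeonhole
  have hcard : (Finset.Ico (T - (2*n-1)) T).card = 2*n - 1 := by
    rw [Nat.card_Ico]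
    omega
  have hfib := Finset.card_eq_sum_card_fiberwise
    (f := fun u => target n α (stSeq n α v u) (v u)) (s := Finset.Ico (T - (2*n-1)) T) (t := univ) (fun u _ => mem_univ _)
  have hfz : ((Finset.Ico (T - (2*n-1)) T).filter fun u => target n α (stSeq n α v u) (v u) = z) = ∅ := by
    rw [Finset.filter_eq_empty_iff]
    intro u hu
    rw [Finset.mem_Ico] at hu
    exact hzuns u hu.1 hu.2
  have hfx : ∀ x : Fin n, x ≠ z → ((Finset.Ico (T - (2*n-1)) T).filter fun u => target n α (stSeq n α v u) (v u) = x).card ≤ 2 := by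
    intro x hx
    have hsplit : ((Finset.Ico (T - (2*n-1)) T).filter fun u => target n α (stSeq n α v u) (v u) = x) =
        (((Finset.Ico (T - (2*n-1)) T).filter fun u => target n α (stSeq n α v u) (v u) = x).filter
          fun u => violated n α (stSeq n α v u) (v u)) ∪
        (((Finset.Ico (T - (2*n-1)) T).filter fun u => target n α (stSeq n α v u) (v u) = x).filter
          fun u => ¬ violated n α (stSeq n α v u) (v u)) := by
      rw [Finset.filter_union_filter_not_eq]
    have hB1 : (((Finset.Ico (T - (2*n-1)) T).filter fun u => target n α (stSeq n α v u) (v u) = x).filter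
        fun u => violated n α (stSeq n α v u) (v u)).card ≤ 1 := by
      rw [Finset.card_le_one]
      intro a ha b hb
      rw [mem_filter, mem_filter, Finset.mem_Ico] at ha hb
      by_contra hne
      rcases Nat.lt_or_ge a b with hab | hab
      · exact hBclaim a b ha.1.1.1 hab hb.1.1.2 ha.2 hb.2 (ha.1.2.trans hb.1.2.symm)
      · have hab' : b < a := by omega
        exact hBclaim b a hb.1.1.1 hab' ha.1.1.2 hb.2 ha.2 (hb.1.2.trans ha.1.2.symm)
    have hM1 : (((Finset.Ico (T - (2*n-1)) T).filter fun u => target n α (stSeq n α v u) (v u) = x).filter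
        fun u => ¬ violated n α (stSeq n α v u) (v u)).card ≤ 1 := by
      rw [Finset.card_le_one]
      intro a ha b hb
      rw [mem_filter, mem_filter, Finset.mem_Ico] at ha hb
      by_contra hne
      rcases Nat.lt_or_ge a b with hab | hab
      · exact hMclaim a b ha.1.1.1 hab hb.1.1.2 ha.2 hb.2 (ha.1.2.trans hb.1.2.symm)
      · have hab' : b < a := by omega
        exact hMclaim b a hb.1.1.1 hab' ha.1.1.2 hb.2 ha.2 (hb.1.2.trans ha.1.2.symm)
    have hun := Finset.card_union_le
      ((((Finset.Ico (T - (2*n-1)) T).filter fun u => target n α (stSeq n α v u) (v u) = x).filter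
          fun u => violated n α (stSeq n α v u) (v u)))
      ((((Finset.Ico (T - (2*n-1)) T).filter fun u => target n α (stSeq n α v u) (v u) = x).filter
          fun u => ¬ violated n α (stSeq n α v u) (v u)))
    rw [← hsplit] at hun
    omega
  have hsum : ∑ x : Fin n, ((Finset.Ico (T - (2*n-1)) T).filter fun u => target n α (stSeq n α v u) (v u) = x).card
      ≤ 2 * (n - 1) := by
    rw [← Finset.add_sum_erase univ _ (mem_univ z), hfz]
    simp only [Finset.card_empty, zero_add]
    calc ∑ x ∈ univ.erase z, ((Finset.Ico (T - (2*n-1)) T).filter fun u => target n α (stSeq n α v u) (v u) = x).card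
        ≤ ∑ x ∈ univ.erase z, 2 := by
          apply Finset.sum_le_sum
          intro x hx
          exact hfx x (Finset.ne_of_mem_erase hx)
    _ = 2 * (n - 1) := by
        rw [Finset.sum_const, smul_eq_mul]
        rw [Finset.card_erase_of_mem (mem_univ z), Finset.card_univ, Fintype.card_fin]
        ring
  rw [hcard] at hfib
  omega

end S17

namespace S17

lemma mms_le_avg (n : ℕ) (hn : 0 < n) (T : ℕ) (w : ℕ → ℝ) (hw : ∀ t, 0 ≤ w t) :
    mmsN n (Finset.range T) w ≤ (∑ t ∈ Finset.range T, w t) / n := by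
  have hTot : 0 ≤ ∑ t ∈ Finset.range T, w t := Finset.sum_nonneg (fun t _ => hw t)
  haveI : NeZero n := ⟨by omega⟩
  apply Real.sSup_le
  · rintro x ⟨P, rfl⟩
    have hbdd : BddBelow (Set.range fun j : Fin n =>
        ∑ t ∈ (Finset.range T).filter (fun t => P t = j), w t) :=
      Set.Finite.bddBelow (Set.finite_range _)
    rw [le_div_iff₀ (by exact_mod_cast hn)]
    have h3 : ∑ j : Fin n, ∑ t ∈ (Finset.range T).filter (fun t => P t = j), w t
        = ∑ t ∈ Finset.range T, w t :=
      Finset.sum_fiberwise_of_maps_to (fun t _ => mem_univ (P t)) w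
    calc (⨅ j : Fin n, ∑ t ∈ (Finset.range T).filter (fun t => P t = j), w t) * n
        = ∑ _j : Fin n, (⨅ j : Fin n, ∑ t ∈ (Finset.range T).filter (fun t => P t = j), w t) := by
          rw [Finset.sum_const, Finset.card_univ, Fintype.card_fin, nsmul_eq_mul, mul_comm]
    _ ≤ ∑ j : Fin n, ∑ t ∈ (Finset.range T).filter (fun t => P t = j), w t := by
          apply Finset.sum_le_sum
          intro j _
          exact ciInf_le hbdd j
    _ = _ := h3
  · positivity

lemma mms_le_smalls (n : ℕ) (hn : 0 < n) (T : ℕ) (w : ℕ → ℝ) (hw : ∀ t, 0 ≤ w t)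
    (c : ℝ) (hc : 0 ≤ c) (B : Finset ℕ) (hB : B ⊆ Finset.range T) (hBcard : B.card ≤ n - 1)
    (hsmall : ∀ t ∈ Finset.range T, t ∉ B → w t ≤ c) :
    mmsN n (Finset.range T) w ≤ ((T - (n-1) : ℕ) : ℝ) * c := by
  haveI : NeZero n := ⟨by omega⟩
  apply Real.sSup_le
  · rintro x ⟨P, rfl⟩
    -- a set of n-1 (or T) goods containing all the big ones
    have hBT : B.card ≤ T := le_trans (Finset.card_le_card hB) (by simp)
    obtain ⟨TOP, hBTOP, hTOPS, hTOPcard⟩ :=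
      Finset.exists_subsuperset_card_eq hB (n := min (n-1) T) (by omega)
        (by rw [Finset.card_range]; omega)
    have hTOPc : TOP.card = min (n-1) T := by omega
    have himg : (TOP.image P).card < n := by
      calc (TOP.image P).card ≤ TOP.card := Finset.card_image_le
      _ < n := by omega
    have hex : ∃ j : Fin n, j ∉ TOP.image P := by
      by_contra h
      push_neg at h
      have : (univ : Finset (Fin n)) ⊆ TOP.image P := fun j _ => h j
      have := Finset.card_le_card this
      rw [Finset.card_univ, Fintype.card_fin] at this
      omega
    obtain ⟨j, hj⟩ := hex
    have hbdd : BddBelow (Set.range fun j : Fin n =>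
        ∑ t ∈ (Finset.range T).filter (fun t => P t = j), w t) :=
      Set.Finite.bddBelow (Set.finite_range _)
    calc (⨅ j : Fin n, ∑ t ∈ (Finset.range T).filter (fun t => P t = j), w t)
        ≤ ∑ t ∈ (Finset.range T).filter (fun t => P t = j), w t := ciInf_le hbdd j
    _ ≤ ∑ t ∈ Finset.range T \ TOP, w t := by
        apply Finset.sum_le_sum_of_subset_of_nonneg
        · intro t ht
          rw [mem_filter] at ht
          rw [Finset.mem_sdiff]
          refine ⟨ht.1, ?_⟩
          intro hcon
          exact hj (Finset.mem_image.2 ⟨t, hcon, ht.2⟩)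
        · intro t _ _
          exact hw t
    _ ≤ (Finset.range T \ TOP).card • c := by
        apply Finset.sum_le_card_nsmul
        intro t ht
        rw [Finset.mem_sdiff] at ht
        exact hsmall t ht.1 (fun hc' => ht.2 (hBTOP hc'))
    _ ≤ ((T - (n-1) : ℕ) : ℝ) * c := by
        rw [Finset.card_sdiff_of_subset hTOPS, Finset.card_range, nsmul_eq_mul]
        apply mul_le_mul_of_nonneg_right _ hc
        have : T - TOP.card = T - (n-1) ∨ T - TOP.card = 0 := by omega
        rcases this with h | h
        · rw [hTOPc]
          have he : T - min (n-1) T = T - (n-1) := by omega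
          rw [he]
        · rw [hTOPc]
          have he : T - min (n-1) T ≤ T - (n-1) := by omega
          exact_mod_cast he
  · positivity

end S17

/-- There is a deterministic online allocation algorithm such that, on every personalized
interval-restricted stream, every agent `i` gets at every time step at least a
`1/(√(α i)·(2n−1))` fraction of its maximin share, improving to `1/(4√(α i))` once `i` has seen
at least `n` goods of value above `√(α i)`. -/
theorem statement17 (n : ℕ) (hn : 1 ≤ n) (α : Fin n → ℝ) (hα : ∀ i, 1 < α i) :
    ∃ F : List (Fin n → NNReal) → Fin n,
      ∀ v : ℕ → Fin n → NNReal,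
        (∀ (t : ℕ) (i : Fin n), 1 ≤ (v t i : ℝ) ∧ (v t i : ℝ) ≤ α i) →
        ∀ (i : Fin n) (T : ℕ),
          mmsN n (Finset.range T) (fun t => (v t i : ℝ)) /
              (Real.sqrt (α i) * (2 * (n : ℝ) - 1)) ≤
            bval n v i (bundle n F v i T) ∧
          (n ≤ ((Finset.range T).filter fun t => Real.sqrt (α i) < (v t i : ℝ)).card →
            mmsN n (Finset.range T) (fun t => (v t i : ℝ)) / (4 * Real.sqrt (α i)) ≤
              bval n v i (bundle n F v i T)) := by
  haveI : NeZero n := ⟨by omega⟩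
  refine ⟨S17.Falg n α, ?_⟩
  intro v hv i T
  have hsq1 : 1 < Real.sqrt (α i) := by
    rw [show (1:ℝ) = Real.sqrt 1 by simp]
    exact Real.sqrt_lt_sqrt (by norm_num) (hα i)
  have hsq0 : (0:ℝ) < Real.sqrt (α i) := by linarith
  have hα0 : (0:ℝ) < α i := lt_trans one_pos (hα i)
  -- the bundle and the big-goods set
  set A := bundle n (S17.Falg n α) v i T with hA
  set K := (Finset.range T).filter (fun t => Real.sqrt (α i) < (v t i : ℝ)) with hK
  set Bg := A.filter (fun t => Real.sqrt (α i) < (v t i : ℝ)) with hBg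
  have hmA : (S17.stSeq n α v T).mc i = A.card := S17.mc_eq_card n α v i T
  have hkK : (S17.stSeq n α v T).kc i = K.card := S17.kc_eq_card n α v i T
  have hbB : (S17.stSeq n α v T).bc i = Bg.card := S17.bc_eq_card n α v i T
  have hBgA : Bg.card ≤ A.card := Finset.card_le_card (Finset.filter_subset _ _)
  have hKT : K.card ≤ T := by
    calc K.card ≤ (Finset.range T).card := Finset.card_le_card (Finset.filter_subset _ _)
    _ = T := Finset.card_range T
  -- value lower bounds
  have hbval_card : (A.card : ℝ) ≤ bval n v i A := by
    calc (A.card : ℝ) = A.card • (1:ℝ) := by rw [nsmul_eq_mul, mul_one]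
    _ ≤ ∑ t ∈ A, (v t i : ℝ) := Finset.card_nsmul_le_sum A _ 1 (fun t _ => (hv t i).1)
    _ = bval n v i A := rfl
  have hbval_split : (Bg.card : ℝ) * (Real.sqrt (α i) - 1) + A.card ≤ bval n v i A := by
    have hsplit : bval n v i A
        = ∑ t ∈ A.filter (fun t => Real.sqrt (α i) < (v t i : ℝ)), (v t i : ℝ)
          + ∑ t ∈ A.filter (fun t => ¬ Real.sqrt (α i) < (v t i : ℝ)), (v t i : ℝ) :=
      (Finset.sum_filter_add_sum_filter_not A _ _).symm
    have h1 : (Bg.card : ℝ) * Real.sqrt (α i)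
        ≤ ∑ t ∈ A.filter (fun t => Real.sqrt (α i) < (v t i : ℝ)), (v t i : ℝ) := by
      rw [hBg, ← nsmul_eq_mul]
      apply Finset.card_nsmul_le_sum
      intro t ht
      rw [mem_filter] at ht
      exact le_of_lt ht.2
    have h2 : ((A.filter (fun t => ¬ Real.sqrt (α i) < (v t i : ℝ))).card : ℝ)
        ≤ ∑ t ∈ A.filter (fun t => ¬ Real.sqrt (α i) < (v t i : ℝ)), (v t i : ℝ) := by
      calc ((A.filter (fun t => ¬ Real.sqrt (α i) < (v t i : ℝ))).card : ℝ)
          = (A.filter (fun t => ¬ Real.sqrt (α i) < (v t i : ℝ))).card • (1:ℝ) := by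
            rw [nsmul_eq_mul, mul_one]
      _ ≤ _ := Finset.card_nsmul_le_sum _ _ 1 (fun t _ => (hv t i).1)
    have hcards : Bg.card + (A.filter (fun t => ¬ Real.sqrt (α i) < (v t i : ℝ))).card
        = A.card := by
      rw [hBg]
      exact Finset.card_filter_add_card_filter_not _
    have hcc : ((A.filter (fun t => ¬ Real.sqrt (α i) < (v t i : ℝ))).card : ℝ)
        = (A.card : ℝ) - Bg.card := by
      have h' : (Bg.card : ℝ) + ((A.filter (fun t => ¬ Real.sqrt (α i) < (v t i : ℝ))).card : ℝ)
          = (A.card : ℝ) := by exact_mod_cast hcards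
      linarith
    rw [hsplit]
    rw [hcc] at h2
    linarith
  -- the total value bound
  have hTot : ∑ t ∈ Finset.range T, (v t i : ℝ)
      ≤ (K.card : ℝ) * α i + ((T - K.card : ℕ) : ℝ) * Real.sqrt (α i) := by
    have hsplit : ∑ t ∈ Finset.range T, (v t i : ℝ)
        = ∑ t ∈ K, (v t i : ℝ)
          + ∑ t ∈ (Finset.range T).filter (fun t => ¬ Real.sqrt (α i) < (v t i : ℝ)), (v t i : ℝ) := by
      rw [hK]
      exact (Finset.sum_filter_add_sum_filter_not (Finset.range T) _ _).symm
    have h1 : ∑ t ∈ K, (v t i : ℝ) ≤ (K.card : ℝ) * α i := by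
      rw [← nsmul_eq_mul]
      apply Finset.sum_le_card_nsmul
      intro t _
      exact (hv t i).2
    have h2 : ∑ t ∈ (Finset.range T).filter (fun t => ¬ Real.sqrt (α i) < (v t i : ℝ)), (v t i : ℝ)
        ≤ (((Finset.range T).filter (fun t => ¬ Real.sqrt (α i) < (v t i : ℝ))).card : ℝ)
          * Real.sqrt (α i) := by
      rw [← nsmul_eq_mul]
      apply Finset.sum_le_card_nsmul
      intro t ht
      rw [mem_filter] at ht
      exact le_of_not_gt ht.2
    have hcards : K.card
        + ((Finset.range T).filter (fun t => ¬ Real.sqrt (α i) < (v t i : ℝ))).card = T := by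
      rw [hK]
      rw [Finset.card_filter_add_card_filter_not _]
      exact Finset.card_range T
    have hcc : (((Finset.range T).filter (fun t => ¬ Real.sqrt (α i) < (v t i : ℝ))).card : ℝ)
        = ((T - K.card : ℕ) : ℝ) := by
      have h3 : (T - K.card : ℕ) = ((Finset.range T).filter (fun t => ¬ Real.sqrt (α i) < (v t i : ℝ))).card := by omega
      rw [h3]
    rw [hsplit]
    rw [hcc] at h2
    linarith
  -- serve-rate invariant
  have hAinv : T ≤ (2*n-1) * A.card + (n-1) := by
    have := S17.A_inv n α v T i
    rw [hmA] at this
    exact this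
  -- big-slack invariant
  have hrpos := S17.rSt_nonneg n α v T i
  rw [S17.rSt'] at hrpos
  constructor
  · -- main bound
    have hden : (0:ℝ) < Real.sqrt (α i) * (2 * (n:ℝ) - 1) := by
      have : (1:ℝ) ≤ (n:ℝ) := by exact_mod_cast hn
      have h2 : (0:ℝ) < 2 * (n:ℝ) - 1 := by linarith
      positivity
    rw [div_le_iff₀ hden]
    rcases Nat.lt_or_ge K.card n with hKn | hKn
    · -- few big goods
      have hmms := S17.mms_le_smalls n (by omega) T (fun t => (v t i : ℝ))
        (fun t => NNReal.coe_nonneg (v t i)) (Real.sqrt (α i)) (le_of_lt hsq0) K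
        (by rw [hK]; exact Finset.filter_subset _ _) (by omega)
        (by
          intro t ht htK
          rw [hK] at htK
          by_contra hcon
          push_neg at hcon
          exact htK (mem_filter.2 ⟨ht, hcon⟩))
      have hstep : ((T - (n-1) : ℕ) : ℝ) ≤ (2*(n:ℝ) - 1) * A.card := by
        have h1 : (T - (n-1) : ℕ) ≤ (2*n-1) * A.card := by omega
        have h2 : ((T - (n-1) : ℕ) : ℝ) ≤ (((2*n-1) * A.card : ℕ):ℝ) := by exact_mod_cast h1
        have h3 : (((2*n-1) * A.card : ℕ):ℝ) = (2*(n:ℝ) - 1) * A.card := by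
          rw [Nat.cast_mul, Nat.cast_sub (by omega)]
          push_cast
          ring
        rw [h3] at h2
        exact h2
      calc mmsN n (Finset.range T) (fun t => (v t i : ℝ))
          ≤ ((T - (n-1) : ℕ) : ℝ) * Real.sqrt (α i) := hmms
      _ ≤ ((2*(n:ℝ) - 1) * A.card) * Real.sqrt (α i) :=
          mul_le_mul_of_nonneg_right hstep (Real.sqrt_nonneg _)
      _ ≤ ((2*(n:ℝ) - 1) * bval n v i A) * Real.sqrt (α i) := by
          apply mul_le_mul_of_nonneg_right _ (Real.sqrt_nonneg _)
          apply mul_le_mul_of_nonneg_left hbval_card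
          have : (1:ℝ) ≤ (n:ℝ) := by exact_mod_cast hn
          linarith
      _ = bval n v i A * (Real.sqrt (α i) * (2 * (n:ℝ) - 1)) := by ring
    · -- many big goods: use the average bound
      have hbc1 : 1 ≤ Bg.card := by
        by_contra h
        have hb0 : (S17.stSeq n α v T).bc i = 0 := by omega
        rw [if_pos hb0, hkK] at hrpos
        have : (K.card : ℤ) ≤ (n:ℤ) - 1 := by omega
        have : (K.card : ℤ) ≥ (n:ℤ) := by exact_mod_cast hKn
        omega
      have hkD : K.card ≤ S17.Dn n * Bg.card := by
        rw [if_neg (by omega : ¬ (S17.stSeq n α v T).bc i = 0), hkK, hbB] at hrpos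
        have h1 : (K.card : ℤ) ≤ (S17.Dn n : ℤ) * Bg.card := by omega
        exact_mod_cast h1
      have hkD2 : K.card ≤ (n * (2*n-1)) * Bg.card :=
        le_trans hkD (Nat.mul_le_mul_right _ (S17.Dn_le_n2n1 n))
      have hTD2 : T ≤ (n * (2*n-1)) * A.card := by
        have h1 : 1 ≤ (2*n-1) * A.card :=
          Nat.one_le_iff_ne_zero.2 (Nat.mul_ne_zero (by omega) (by omega))
        have h2 : (n * (2*n-1)) * A.card = (2*n-1)*A.card + (n-1) * ((2*n-1)*A.card) := by
          obtain ⟨n', rfl⟩ : ∃ m, n = m + 1 := ⟨n-1, by omega⟩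
          simp only [Nat.add_sub_cancel]
          ring
        have h3 : (n-1) * 1 ≤ (n-1) * ((2*n-1)*A.card) := Nat.mul_le_mul_left _ h1
        omega
      -- assemble over the reals
      have hmms := S17.mms_le_avg n (by omega) T (fun t => (v t i : ℝ)) (fun t => NNReal.coe_nonneg (v t i))
      have hmain : ∑ t ∈ Finset.range T, (v t i : ℝ)
          ≤ (n:ℝ) * (bval n v i A * (Real.sqrt (α i) * (2 * (n:ℝ) - 1))) := by
        have e1 : (K.card : ℝ) * α i + ((T - K.card : ℕ) : ℝ) * Real.sqrt (α i)
            = Real.sqrt (α i) * ((K.card : ℝ) * (Real.sqrt (α i) - 1) + T) := by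
          rw [Nat.cast_sub hKT]
          have hss : Real.sqrt (α i) * Real.sqrt (α i) = α i := Real.mul_self_sqrt (le_of_lt hα0)
          linear_combination (-(K.card : ℝ)) * hss
        have e2 : (K.card : ℝ) * (Real.sqrt (α i) - 1) + T
            ≤ ((n * (2*n-1) : ℕ) : ℝ) * ((Bg.card : ℝ) * (Real.sqrt (α i) - 1) + A.card) := by
          have c1 : (K.card : ℝ) ≤ ((n * (2*n-1) : ℕ) : ℝ) * Bg.card := by
            exact_mod_cast hkD2
          have c2 : (T : ℝ) ≤ ((n * (2*n-1) : ℕ) : ℝ) * A.card := by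
            exact_mod_cast hTD2
          have c3 : (K.card : ℝ) * (Real.sqrt (α i) - 1)
              ≤ (((n * (2*n-1) : ℕ) : ℝ) * Bg.card) * (Real.sqrt (α i) - 1) :=
            mul_le_mul_of_nonneg_right c1 (by linarith)
          have c4 : (((n * (2*n-1) : ℕ) : ℝ) * Bg.card) * (Real.sqrt (α i) - 1)
              + ((n * (2*n-1) : ℕ) : ℝ) * A.card
              = ((n * (2*n-1) : ℕ) : ℝ) * ((Bg.card : ℝ) * (Real.sqrt (α i) - 1) + A.card) := by
            ring
          linarith
        have e3 : ((n * (2*n-1) : ℕ) : ℝ) = (n:ℝ) * (2*(n:ℝ) - 1) := by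
          rw [Nat.cast_mul, Nat.cast_sub (by omega)]
          push_cast
          ring
        have e4 : ((Bg.card : ℝ) * (Real.sqrt (α i) - 1) + A.card) ≤ bval n v i A := hbval_split
        have e5 : (0:ℝ) ≤ ((n * (2*n-1) : ℕ) : ℝ) := by positivity
        calc ∑ t ∈ Finset.range T, (v t i : ℝ)
            ≤ Real.sqrt (α i) * ((K.card : ℝ) * (Real.sqrt (α i) - 1) + T) := by
              rw [← e1]; exact hTot
        _ ≤ Real.sqrt (α i) * (((n * (2*n-1) : ℕ) : ℝ)
              * ((Bg.card : ℝ) * (Real.sqrt (α i) - 1) + A.card)) :=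
            mul_le_mul_of_nonneg_left e2 (Real.sqrt_nonneg _)
        _ ≤ Real.sqrt (α i) * (((n * (2*n-1) : ℕ) : ℝ) * bval n v i A) := by
            apply mul_le_mul_of_nonneg_left _ (Real.sqrt_nonneg _)
            exact mul_le_mul_of_nonneg_left e4 e5
        _ = (n:ℝ) * (bval n v i A * (Real.sqrt (α i) * (2 * (n:ℝ) - 1))) := by
            rw [e3]; ring
      calc mmsN n (Finset.range T) (fun t => (v t i : ℝ))
          ≤ (∑ t ∈ Finset.range T, (v t i : ℝ)) / n := hmms
      _ ≤ bval n v i A * (Real.sqrt (α i) * (2 * (n:ℝ) - 1)) := by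
          rw [div_le_iff₀ (by exact_mod_cast (by omega : 0 < n) : (0:ℝ) < (n:ℝ))]
          calc ∑ t ∈ Finset.range T, (v t i : ℝ) ≤ _ := hmain
          _ = bval n v i A * (Real.sqrt (α i) * (2 * (n:ℝ) - 1)) * n := by ring
  · -- improved bound with many big goods
    intro hKn
    have hden : (0:ℝ) < 4 * Real.sqrt (α i) := by positivity
    rw [div_le_iff₀ hden]
    have hbc1 : 1 ≤ Bg.card := by
      by_contra h
      have hb0 : (S17.stSeq n α v T).bc i = 0 := by omega
      rw [if_pos hb0, hkK] at hrpos
      have h1 : (K.card : ℤ) ≤ (n:ℤ) - 1 := by omega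
      have h2 : (n:ℤ) ≤ (K.card : ℤ) := by exact_mod_cast hKn
      omega
    have hkD : K.card ≤ S17.Dn n * Bg.card := by
      rw [if_neg (by omega : ¬ (S17.stSeq n α v T).bc i = 0), hkK, hbB] at hrpos
      have h1 : (K.card : ℤ) ≤ (S17.Dn n : ℤ) * Bg.card := by omega
      exact_mod_cast h1
    have hkD4 : K.card ≤ (4*n) * Bg.card :=
      le_trans hkD (Nat.mul_le_mul_right _ (S17.Dn_le_4n n))
    have hTD4 : T ≤ (4*n) * A.card := by
      have hA1 : 1 ≤ A.card := le_trans hbc1 hBgA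
      have h2 : (4*n) * A.card = (2*n-1)*A.card + (2*n+1) * A.card := by
        obtain ⟨n', rfl⟩ : ∃ m, n = m + 1 := ⟨n-1, by omega⟩
        have he : 2*(n'+1) - 1 = 2*n' + 1 := by omega
        rw [he]
        ring
      have h3 : (n-1) * 1 ≤ (2*n+1) * A.card := by
        apply Nat.mul_le_mul (by omega) hA1
      omega
    have hmms := S17.mms_le_avg n (by omega) T (fun t => (v t i : ℝ)) (fun t => NNReal.coe_nonneg (v t i))
    have hmain : ∑ t ∈ Finset.range T, (v t i : ℝ)
        ≤ (n:ℝ) * (bval n v i A * (4 * Real.sqrt (α i))) := by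
      have e1 : (K.card : ℝ) * α i + ((T - K.card : ℕ) : ℝ) * Real.sqrt (α i)
          = Real.sqrt (α i) * ((K.card : ℝ) * (Real.sqrt (α i) - 1) + T) := by
        rw [Nat.cast_sub hKT]
        have hss : Real.sqrt (α i) * Real.sqrt (α i) = α i := Real.mul_self_sqrt (le_of_lt hα0)
        linear_combination (-(K.card : ℝ)) * hss
      have e2 : (K.card : ℝ) * (Real.sqrt (α i) - 1) + T
          ≤ ((4*n : ℕ) : ℝ) * ((Bg.card : ℝ) * (Real.sqrt (α i) - 1) + A.card) := by
        have c1 : (K.card : ℝ) ≤ ((4*n : ℕ) : ℝ) * Bg.card := by exact_mod_cast hkD4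
        have c2 : (T : ℝ) ≤ ((4*n : ℕ) : ℝ) * A.card := by exact_mod_cast hTD4
        have c3 : (K.card : ℝ) * (Real.sqrt (α i) - 1)
            ≤ (((4*n : ℕ) : ℝ) * Bg.card) * (Real.sqrt (α i) - 1) :=
          mul_le_mul_of_nonneg_right c1 (by linarith)
        have c4 : (((4*n : ℕ) : ℝ) * Bg.card) * (Real.sqrt (α i) - 1)
            + ((4*n : ℕ) : ℝ) * A.card
            = ((4*n : ℕ) : ℝ) * ((Bg.card : ℝ) * (Real.sqrt (α i) - 1) + A.card) := by
          ring
        linarith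
      have e4 : ((Bg.card : ℝ) * (Real.sqrt (α i) - 1) + A.card) ≤ bval n v i A := hbval_split
      have e5 : (0:ℝ) ≤ ((4*n : ℕ) : ℝ) := by positivity
      calc ∑ t ∈ Finset.range T, (v t i : ℝ)
          ≤ Real.sqrt (α i) * ((K.card : ℝ) * (Real.sqrt (α i) - 1) + T) := by
            rw [← e1]; exact hTot
      _ ≤ Real.sqrt (α i) * (((4*n : ℕ) : ℝ)
            * ((Bg.card : ℝ) * (Real.sqrt (α i) - 1) + A.card)) :=
          mul_le_mul_of_nonneg_left e2 (Real.sqrt_nonneg _)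
      _ ≤ Real.sqrt (α i) * (((4*n : ℕ) : ℝ) * bval n v i A) := by
          apply mul_le_mul_of_nonneg_left _ (Real.sqrt_nonneg _)
          exact mul_le_mul_of_nonneg_left e4 e5
      _ = (n:ℝ) * (bval n v i A * (4 * Real.sqrt (α i))) := by
          push_cast
          ring
    calc mmsN n (Finset.range T) (fun t => (v t i : ℝ))
        ≤ (∑ t ∈ Finset.range T, (v t i : ℝ)) / n := hmms
    _ ≤ bval n v i A * (4 * Real.sqrt (α i)) := by
        rw [div_le_iff₀ (by exact_mod_cast (by omega : 0 < n) : (0:ℝ) < (n:ℝ))]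
        calc ∑ t ∈ Finset.range T, (v t i : ℝ) ≤ _ := hmain
        _ = bval n v i A * (4 * Real.sqrt (α i)) * n := by ring

end
end

section
/- For every integer n ≥ 1 and every α : Fin n → ℝ with α i > 1 for all i, there exists a deterministic online allocation algorithm with foresight n−1 such that for every personalized interval-restricted stream v (i.e., 1 ≤ v t i ≤ α i for all t, i): at the end of every time step T, for all agents i, j there exists X ⊆ A_j^T with |X| ≤ 2 and v_i(A_i^T) ≥ (1/√(α i)) · Σ_{t ∈ A_j^T ∖ X} v t i; at the end of every time step T = kn with k ∈ ℕ, for all agents i, j there exists X ⊆ A_j^T with |X| ≤ 1 and v_i(A_i^T) ≥ (1/√(α i)) · Σ_{t ∈ A_j^T ∖ X} v t i. -/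
open Finset

noncomputable section

/-- The agent to whom good `t` is assigned by the deterministic online algorithm `F` with
foresight `ℓ` on stream `v`: `σ(t) = F [v 0, …, v (t+ℓ)]`. -/
def allocF (n ℓ : ℕ) (F : List (Fin n → NNReal) → Fin n) (v : ℕ → Fin n → NNReal)
    (t : ℕ) : Fin n :=
  F ((List.range (t + ℓ + 1)).map v)

/-- The bundle of agent `i` at the end of time step `T`. -/
def bundleF (n ℓ : ℕ) (F : List (Fin n → NNReal) → Fin n) (v : ℕ → Fin n → NNReal)
    (i : Fin n) (T : ℕ) : Finset ℕ :=
  (Finset.range T).filter fun t => allocF n ℓ F v t = i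

namespace S18

lemma rank_of_acyclic {V : Type*} [Fintype V] (R : V → V → Prop)
    (h : ∀ x, ¬ Relation.TransGen R x x) :
    ∃ r : V → ℕ, ∀ x y, R x y → r x < r y := by
  classical
  refine ⟨fun x => (Finset.univ.filter (fun z => Relation.TransGen R z x)).card, ?_⟩
  intro x y hxy
  apply Finset.card_lt_card
  constructor
  · intro z hz
    simp only [Finset.mem_filter, Finset.mem_univ, true_and] at hz ⊢
    exact hz.tail hxy
  · intro hsub
    have hx : x ∈ Finset.univ.filter (fun z => Relation.TransGen R z y) := by
      simp only [Finset.mem_filter, Finset.mem_univ, true_and]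
      exact Relation.TransGen.single hxy
    have := hsub hx
    simp only [Finset.mem_filter, Finset.mem_univ, true_and] at this
    exact h x this

lemma walk_of_transGen {V : Type*} {R : V → V → Prop} {a b : V}
    (h : Relation.TransGen R a b) :
    ∃ (m : ℕ) (w : ℕ → V), 0 < m ∧ w 0 = a ∧ w m = b ∧ ∀ t < m, R (w t) (w (t+1)) := by
  induction h with
  | @single c hr =>
      exact ⟨1, fun t => if t = 0 then a else c, Nat.one_pos, by simp, by simp, by
        intro t ht
        interval_cases t
        simpa using hr⟩
  | @tail b' c hab hbc ih =>
      obtain ⟨m, w, hm, h0, hmb, hstep⟩ := ih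
      refine ⟨m+1, fun t => if t ≤ m then w t else c, by omega, by simp [h0], by simp, ?_⟩
      intro t ht
      rcases Nat.lt_or_ge t m with h1 | h1
      · show R (if t ≤ m then w t else c) (if t + 1 ≤ m then w (t+1) else c)
        rw [if_pos (by omega : t ≤ m), if_pos (by omega : t + 1 ≤ m)]
        exact hstep t h1
      · have htm : t = m := by omega
        subst htm
        show R (if t ≤ t then w t else c) (if t + 1 ≤ t then w (t+1) else c)
        rw [if_pos le_rfl, if_neg (by omega)]
        rwa [← hmb] at hbc

lemma exists_simple_cycle {V : Type*} {R : V → V → Prop} {x : V}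
    (h : Relation.TransGen R x x) :
    ∃ (m : ℕ) (w : ℕ → V), 0 < m ∧ w m = w 0 ∧ (∀ t < m, R (w t) (w (t+1))) ∧
      ∀ s t, s < t → t < m → w s ≠ w t := by
  classical
  have hex : ∃ m : ℕ, ∃ w : ℕ → V, 0 < m ∧ w m = w 0 ∧ ∀ t < m, R (w t) (w (t+1)) := by
    obtain ⟨m, w, hm, h0, hmb, hstep⟩ := walk_of_transGen h
    exact ⟨m, w, hm, by rw [hmb, h0], hstep⟩
  obtain ⟨w, hm, hclose, hstep⟩ := Nat.find_spec hex
  set m := Nat.find hex with hmdef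
  refine ⟨m, w, hm, hclose, hstep, ?_⟩
  intro s t hst htm heq
  set d := t - s with hd
  have hd1 : 0 < d := by omega
  have hPm' : ∃ w' : ℕ → V, 0 < m - d ∧ w' (m - d) = w' 0 ∧
      ∀ u < m - d, R (w' u) (w' (u+1)) := by
    refine ⟨fun u => if u < s then w u else w (u + d), by omega, ?_, ?_⟩
    · show (if m - d < s then w (m-d) else w (m - d + d)) = (if 0 < s then w 0 else w (0 + d))
      rw [if_neg (by omega : ¬ (m - d < s))]
      have h5 : m - d + d = m := by omega
      rw [h5, hclose]
      by_cases h2 : 0 < s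
      · rw [if_pos h2]
      · have hs0 : s = 0 := by omega
        rw [if_neg h2]
        rw [Nat.zero_add]
        rw [hs0] at heq
        rw [heq]
        congr 1
        omega
    · intro u hu
      show R (if u < s then w u else w (u + d)) (if u + 1 < s then w (u+1) else w (u + 1 + d))
      by_cases h1 : u + 1 < s
      · rw [if_pos (by omega : u < s), if_pos h1]
        exact hstep u (by omega)
      · by_cases h2 : u < s
        · have hus : u + 1 = s := by omega
          rw [if_pos h2, if_neg h1]
          have h6 : u + 1 + d = t := by omega
          rw [h6, ← heq, ← hus]
          exact hstep u (by omega)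
        · rw [if_neg h2, if_neg h1]
          have h7 : u + d + 1 = u + 1 + d := by omega
          have := hstep (u + d) (by omega)
          rwa [h7] at this
  obtain ⟨w', h1, h2, h3⟩ := hPm'
  exact absurd ⟨w', h1, h2, h3⟩ (Nat.find_min hex (by omega : m - d < m))

variable {n : ℕ}

open Classical in
/-- Counter update after one block: a `hit` adds 1, a `comp` subtracts 1. -/
def upd (Φ : Fin n → Fin n → ℤ) (big : Fin n → Fin n → Prop) (p : Equiv.Perm (Fin n)) :
    Fin n → Fin n → ℤ := fun i j =>
  Φ i j + (if (∃ r, big i r) ∧ ¬ big i (p i) ∧ big i (p j) then 1 else 0)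
        - (if big i (p i) ∧ ¬ big i (p j) then 1 else 0)

open Classical in
def rankOf (Φ : Fin n → Fin n → ℤ) : Fin n → ℕ :=
  if h : ∃ r : Fin n → ℕ, ∀ i j, Φ i j = 1 → r i < r j then h.choose else fun _ => 0

def wt (Φ : Fin n → Fin n → ℤ) : Fin n → ℝ := fun i => (2⁻¹ : ℝ) ^ (rankOf Φ i)

lemma wt_pos (Φ : Fin n → Fin n → ℤ) (i : Fin n) : 0 < wt Φ i :=
  pow_pos (by norm_num) _

lemma rankOf_spec {Φ : Fin n → Fin n → ℤ}
    (hr : ∃ r : Fin n → ℕ, ∀ i j, Φ i j = 1 → r i < r j) :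
    ∀ i j, Φ i j = 1 → rankOf Φ i < rankOf Φ j := by
  intro i j h
  rw [rankOf, dif_pos hr]
  exact hr.choose_spec i j h

lemma wt_lt {Φ : Fin n → Fin n → ℤ}
    (hr : ∃ r : Fin n → ℕ, ∀ i j, Φ i j = 1 → r i < r j) {i j : Fin n} (h : Φ i j = 1) :
    wt Φ j < wt Φ i :=
  pow_lt_pow_right_of_lt_one₀ (by norm_num) (by norm_num) (rankOf_spec hr i j h)

open Classical in
def score (Φ : Fin n → Fin n → ℤ) (big : Fin n → Fin n → Prop) (p : Equiv.Perm (Fin n)) : ℝ :=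
  ∑ i : Fin n, if big i (p i) then wt Φ i else 0

def chooseP (Φ : Fin n → Fin n → ℤ) (big : Fin n → Fin n → Prop) : Equiv.Perm (Fin n) :=
  Classical.choose
    (Finset.exists_max_image Finset.univ (score Φ big) ⟨1, Finset.mem_univ 1⟩)

lemma chooseP_spec (Φ : Fin n → Fin n → ℤ) (big : Fin n → Fin n → Prop)
    (q : Equiv.Perm (Fin n)) : score Φ big q ≤ score Φ big (chooseP Φ big) := by
  have := Classical.choose_spec
    (Finset.exists_max_image Finset.univ (score Φ big) ⟨1, Finset.mem_univ 1⟩)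
  exact this.2 q (Finset.mem_univ q)

lemma sum_pair_split {f : Fin n → ℝ} {i j : Fin n} (hij : i ≠ j) :
    ∑ x, f x = f i + f j + ∑ x ∈ (Finset.univ.erase i).erase j, f x := by
  rw [← Finset.add_sum_erase _ f (Finset.mem_univ i)]
  rw [← Finset.add_sum_erase _ f (Finset.mem_erase.mpr ⟨hij.symm, Finset.mem_univ j⟩)]
  ring

/-- The chosen matching never "hits" a pair whose counter is already 1. -/
lemma no_fatal {Φ : Fin n → Fin n → ℤ} {big : Fin n → Fin n → Prop}
    (hr : ∃ r : Fin n → ℕ, ∀ i j, Φ i j = 1 → r i < r j)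
    {i j : Fin n} (hΦ : Φ i j = 1)
    (hnw : ¬ big i (chooseP Φ big i)) : ¬ big i (chooseP Φ big j) := by
  classical
  intro hbig
  set p := chooseP Φ big with hp
  have hij : i ≠ j := by
    intro hh; subst hh; exact hnw hbig
  set q : Equiv.Perm (Fin n) := (Equiv.swap i j).trans p with hq
  have hqi : q i = p j := by simp [hq, Equiv.swap_apply_left]
  have hqj : q j = p i := by simp [hq, Equiv.swap_apply_right]
  have hqx : ∀ x, x ≠ i → x ≠ j → q x = p x := by
    intro x h1 h2
    simp [hq, Equiv.swap_apply_of_ne_of_ne h1 h2]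
  have hscore : score Φ big p < score Φ big q := by
    rw [score, score, sum_pair_split (f := fun x => if big x (p x) then wt Φ x else 0) hij,
      sum_pair_split (f := fun x => if big x (q x) then wt Φ x else 0) hij]
    have hrest : ∑ x ∈ (Finset.univ.erase i).erase j, (if big x (q x) then wt Φ x else 0)
        = ∑ x ∈ (Finset.univ.erase i).erase j, (if big x (p x) then wt Φ x else 0) := by
      apply Finset.sum_congr rfl
      intro x hx
      simp only [Finset.mem_erase] at hx
      rw [hqx x hx.2.1 hx.1]
    rw [hrest]
    have h1 : (if big i (q i) then wt Φ i else 0) = wt Φ i := by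
      rw [hqi, if_pos hbig]
    have h2 : (if big i (p i) then wt Φ i else 0) = 0 := by rw [if_neg hnw]
    have h3 : (if big j (p j) then wt Φ j else 0) ≤ wt Φ j := by
      split
      · exact le_rfl
      · exact (wt_pos Φ j).le
    have h4 : (0:ℝ) ≤ (if big j (q j) then wt Φ j else 0) := by
      split
      · exact (wt_pos Φ j).le
      · exact le_rfl
    have h5 : wt Φ j < wt Φ i := wt_lt hr hΦ
    linarith
  exact absurd (chooseP_spec Φ big q) (not_le.mpr hscore)

lemma upd_le_one {Φ : Fin n → Fin n → ℤ} {big : Fin n → Fin n → Prop}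
    (inv1 : ∀ i j, Φ i j ≤ 1)
    (hr : ∃ r : Fin n → ℕ, ∀ i j, Φ i j = 1 → r i < r j) :
    ∀ i j, upd Φ big (chooseP Φ big) i j ≤ 1 := by
  classical
  intro i j
  rw [upd]
  set p := chooseP Φ big
  by_cases hhit : (∃ r, big i r) ∧ ¬ big i (p i) ∧ big i (p j)
  · have hΦ : Φ i j ≠ 1 := by
      intro h1
      exact no_fatal hr h1 hhit.2.1 hhit.2.2
    have : Φ i j ≤ 0 := by
      have := inv1 i j; omega
    rw [if_pos hhit]
    split <;> omega
  · rw [if_neg hhit]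
    have := inv1 i j
    split <;> omega

lemma edge_cases {Φ : Fin n → Fin n → ℤ} {big : Fin n → Fin n → Prop}
    {p : Equiv.Perm (Fin n)} (inv1 : ∀ i j, Φ i j ≤ 1) {a b : Fin n}
    (hE : upd Φ big p a b = 1) :
    (big a (p a) → big a (p b)) ∧
      (Φ a b = 1 ∨ ((∃ r, big a r) ∧ ¬ big a (p a) ∧ big a (p b))) := by
  classical
  rw [upd] at hE
  have h1 := inv1 a b
  by_cases hhit : (∃ r, big a r) ∧ ¬ big a (p a) ∧ big a (p b)
  · exact ⟨fun hw => absurd hw hhit.2.1, Or.inr hhit⟩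
  · rw [if_neg hhit] at hE
    by_cases hcomp : big a (p a) ∧ ¬ big a (p b)
    · rw [if_pos hcomp] at hE; omega
    · rw [if_neg hcomp] at hE
      have hΦ : Φ a b = 1 := by omega
      refine ⟨fun hw => ?_, Or.inl hΦ⟩
      by_contra hnb
      exact hcomp ⟨hw, hnb⟩

/-- After the chosen matching, the updated counters still admit a monotone rank. -/
lemma upd_rank_exists {Φ : Fin n → Fin n → ℤ} {big : Fin n → Fin n → Prop}
    (inv1 : ∀ i j, Φ i j ≤ 1)
    (hr : ∃ r : Fin n → ℕ, ∀ i j, Φ i j = 1 → r i < r j) :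
    ∃ r' : Fin n → ℕ, ∀ i j, upd Φ big (chooseP Φ big) i j = 1 → r' i < r' j := by
  classical
  set p := chooseP Φ big with hp
  set E' : Fin n → Fin n → Prop := fun a b => upd Φ big p a b = 1 with hE'
  apply rank_of_acyclic
  intro x hx
  obtain ⟨m, w, hm, hclose, hstep, hinj⟩ := exists_simple_cycle hx
  have hcyc : ∀ t < m, E' (w t) (w ((t+1) % m)) := by
    intro t ht
    rcases Nat.lt_or_ge (t+1) m with h1 | h1
    · rw [Nat.mod_eq_of_lt h1]; exact hstep t ht
    · have : t + 1 = m := by omega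
      rw [this, Nat.mod_self, ← hclose, ← this]
      exact hstep t ht
  by_cases hold : ∀ t < m, Φ (w t) (w ((t+1) % m)) = 1
  · have mono := rankOf_spec hr
    have incr : ∀ t, t < m → rankOf Φ (w 0) ≤ rankOf Φ (w t) := by
      intro t
      induction t with
      | zero => intro _; exact le_rfl
      | succ s ih =>
          intro hs
          have h2 := mono _ _ (hold s (by omega))
          rw [Nat.mod_eq_of_lt (by omega : s + 1 < m)] at h2
          exact le_trans (ih (by omega)) h2.le
    have hlast := mono _ _ (hold (m-1) (by omega))
    have h0 : (m - 1 + 1) % m = 0 := by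
      have : m - 1 + 1 = m := by omega
      rw [this, Nat.mod_self]
    rw [h0] at hlast
    exact absurd hlast (not_lt.mpr (incr (m-1) (by omega)))
  · push_neg at hold
    obtain ⟨t0, ht0, hnew⟩ := hold
    have hnewprop : ¬ big (w t0) (p (w t0)) ∧ big (w t0) (p (w ((t0+1) % m))) := by
      have := (edge_cases inv1 (hcyc t0 ht0)).2
      rcases this with h1 | h2
      · exact absurd h1 hnew
      · exact ⟨h2.2.1, h2.2.2⟩
    set L : List (Fin n) := (List.range m).map w with hL
    have hLlen : L.length = m := by simp [hL]
    have hLget : ∀ (t : ℕ) (h : t < L.length), L[t] = w t := by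
      intro t h
      simp [hL]
    have hLnodup : L.Nodup := by
      rw [hL]
      apply List.Nodup.map_on _ List.nodup_range
      intro s hs t ht hw
      simp only [List.mem_range] at hs ht
      rcases Nat.lt_trichotomy s t with h | h | h
      · exact absurd hw (hinj s t h ht)
      · exact h
      · exact absurd hw.symm (hinj t s h hs)
    set q : Equiv.Perm (Fin n) := (List.formPerm L).trans p with hqdef
    have hqL : ∀ (t : ℕ), t < m → q (w t) = p (w ((t+1) % m)) := by
      intro t ht
      have h1 : w t = L[t]'(by omega) := (hLget t (by omega)).symm
      have h2 : List.formPerm L (L[t]'(by omega)) =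
          L[(t+1) % L.length]'(Nat.mod_lt _ (by omega)) :=
        List.formPerm_apply_getElem L hLnodup t (by omega)
      simp only [hqdef, Equiv.trans_apply]
      rw [h1, h2]
      congr 1
      rw [hLget ((t+1) % L.length) (Nat.mod_lt _ (by omega))]
      congr 1
      rw [hLlen]
    have hqX : ∀ x, x ∉ L → q x = p x := by
      intro x hxL
      simp only [hqdef, Equiv.trans_apply]
      rw [List.formPerm_apply_of_notMem hxL]
    have hscore : score Φ big p < score Φ big q := by
      apply Finset.sum_lt_sum
      · intro x _
        by_cases hxL : x ∈ L
        · obtain ⟨t, ht, hxw⟩ : ∃ t, t < m ∧ w t = x := by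
            rw [hL] at hxL
            simp only [List.mem_map, List.mem_range] at hxL
            obtain ⟨t, ht, hw⟩ := hxL
            exact ⟨t, ht, hw⟩
          subst hxw
          rw [hqL t ht]
          by_cases hwin : big (w t) (p (w t))
          · have := (edge_cases inv1 (hcyc t ht)).1 hwin
            rw [if_pos hwin, if_pos this]
          · rw [if_neg hwin]
            split
            · exact (wt_pos Φ _).le
            · exact le_rfl
        · rw [hqX x hxL]
      · refine ⟨w t0, Finset.mem_univ _, ?_⟩
        rw [hqL t0 ht0, if_neg hnewprop.1, if_pos hnewprop.2]
        exact wt_pos Φ _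
    exact absurd (chooseP_spec Φ big q) (not_le.mpr hscore)

-- ### the machine
def mSt (B : ℕ → Fin n → Fin n → Prop) : ℕ → Fin n → Fin n → ℤ
  | 0 => fun _ _ => 0
  | b+1 => upd (mSt B b) (B b) (chooseP (mSt B b) (B b))

def mP (B : ℕ → Fin n → Fin n → Prop) (b : ℕ) : Equiv.Perm (Fin n) :=
  chooseP (mSt B b) (B b)

lemma mSt_congr {B B' : ℕ → Fin n → Fin n → Prop} :
    ∀ b, (∀ b' < b, B b' = B' b') → mSt B b = mSt B' b := by
  intro b
  induction b with
  | zero => intro _; rfl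
  | succ b ih =>
      intro hh
      have h1 : mSt B b = mSt B' b := ih (fun b' hb' => hh b' (by omega))
      show upd (mSt B b) (B b) (chooseP (mSt B b) (B b)) = _
      rw [h1, hh b (by omega)]
      rfl

lemma mP_congr {B B' : ℕ → Fin n → Fin n → Prop} (b : ℕ)
    (hh : ∀ b' ≤ b, B b' = B' b') : mP B b = mP B' b := by
  rw [mP, mP, mSt_congr b (fun b' hb' => hh b' hb'.le), hh b le_rfl]

lemma mSt_inv (B : ℕ → Fin n → Fin n → Prop) (b : ℕ) :
    (∀ i j, mSt B b i j ≤ 1) ∧ (∃ r : Fin n → ℕ, ∀ i j, mSt B b i j = 1 → r i < r j) := by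
  induction b with
  | zero => exact ⟨fun i j => by norm_num [mSt], ⟨fun _ => 0, fun i j h => by simp [mSt] at h⟩⟩
  | succ b ih => exact ⟨upd_le_one ih.1 ih.2, upd_rank_exists ih.1 ih.2⟩

/-- A hit is only possible when the counter is at most zero. -/
lemma mSt_hit_le_zero (B : ℕ → Fin n → Fin n → Prop) (b : ℕ) {i j : Fin n}
    (hhit : (∃ r, B b i r) ∧ ¬ B b i (mP B b i) ∧ B b i (mP B b j)) :
    mSt B b i j ≤ 0 := by
  have h1 := (mSt_inv B b).1 i j
  have h2 : mSt B b i j ≠ 1 := by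
    intro hh
    exact no_fatal (mSt_inv B b).2 hh hhit.2.1 hhit.2.2
  omega

open Classical in
lemma mSt_succ (B : ℕ → Fin n → Fin n → Prop) (b : ℕ) (i j : Fin n) :
    mSt B (b+1) i j = mSt B b i j
      + (if (∃ r, B b i r) ∧ ¬ B b i (mP B b i) ∧ B b i (mP B b j) then 1 else 0)
      - (if B b i (mP B b i) ∧ ¬ B b i (mP B b j) then 1 else 0) := rfl

-- ### stream instantiation
def BigS (α : Fin n → ℝ) (u : ℕ → Fin n → NNReal) (b : ℕ) : Fin n → Fin n → Prop :=
  fun i r => Real.sqrt (α i) ≤ (u (b * n + (r : ℕ)) i : ℝ)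

def sigmaF (α : Fin n → ℝ) (hn : 0 < n) (u : ℕ → Fin n → NNReal) (t : ℕ) : Fin n :=
  (mP (BigS α u) (t / n)).symm ⟨t % n, Nat.mod_lt t hn⟩

def algF (α : Fin n → ℝ) (hn : 0 < n) : List (Fin n → NNReal) → Fin n :=
  fun L => sigmaF α hn (fun s => L.getD s (fun _ => 1)) (L.length - n)

lemma alloc_eq (α : Fin n → ℝ) (hn : 0 < n) (v : ℕ → Fin n → NNReal) (t : ℕ) :
    allocF n (n-1) (algF α hn) v t = sigmaF α hn v t := by
  rw [allocF, algF]
  set L : List (Fin n → NNReal) := (List.range (t + (n-1) + 1)).map v with hL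
  have hLlen : L.length = t + n := by simp [hL]; omega
  set u : ℕ → Fin n → NNReal := fun s => L.getD s (fun _ => 1) with hu
  have hagree : ∀ s, s < t + n → u s = v s := by
    intro s hs
    rw [hu]
    simp only
    rw [List.getD_eq_getElem _ _ (by omega : s < L.length)]
    simp [hL]
  have hBig : ∀ b' ≤ t / n, BigS α u b' = BigS α v b' := by
    intro b' hb'
    funext i r
    rw [BigS, BigS, hagree (b' * n + (r:ℕ)) ?_]
    have h1 : (t / n) * n ≤ t := Nat.div_mul_le_self t n
    have h2 : b' * n ≤ (t/n) * n := Nat.mul_le_mul_right n hb'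
    have h3 : (r : ℕ) < n := r.isLt
    omega
  have hlen2 : L.length - n = t := by omega
  rw [hlen2]
  rw [sigmaF, sigmaF, mP_congr (t/n) (fun b' hb' => hBig b' hb')]


lemma sigmaF_block (α : Fin n → ℝ) (hn : 0 < n) (u : ℕ → Fin n → NNReal) (b r : ℕ)
    (hr : r < n) :
    sigmaF α hn u (b*n + r) = (mP (BigS α u) b).symm ⟨r, hr⟩ := by
  have h1 : (b * n + r) / n = b := by
    rw [Nat.add_comm, Nat.add_mul_div_right _ _ hn, Nat.div_eq_of_lt hr, Nat.zero_add]
  have h2 : (b * n + r) % n = r := by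
    rw [Nat.add_comm, Nat.add_mul_mod_self_right, Nat.mod_eq_of_lt hr]
  show (mP (BigS α u) ((b*n+r) / n)).symm ⟨(b*n+r) % n, Nat.mod_lt _ hn⟩ = _
  have key : ∀ (c : ℕ) (_ : c = b) (x : Fin n) (_ : (x:ℕ) = r),
      (mP (BigS α u) c).symm x = (mP (BigS α u) b).symm ⟨r, hr⟩ := by
    intro c hc x hx
    subst hc
    congr 1
    exact Fin.ext hx
  exact key _ h1 _ h2

end S18

/-- There is a deterministic online allocation algorithm with foresight `n−1` such that, on
every personalized interval-restricted stream, the allocation is `(1/√(α i))`-EF2 at the end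
of every time step and `(1/√(α i))`-EF1 at the end of every time step `T = kn`. -/
theorem statement18 (n : ℕ) (hn : 1 ≤ n) (α : Fin n → ℝ) (hα : ∀ i, 1 < α i) :
    ∃ F : List (Fin n → NNReal) → Fin n,
      ∀ v : ℕ → Fin n → NNReal,
        (∀ (t : ℕ) (i : Fin n), 1 ≤ (v t i : ℝ) ∧ (v t i : ℝ) ≤ α i) →
        (∀ (T : ℕ) (i j : Fin n), ∃ X ⊆ bundleF n (n - 1) F v j T, X.card ≤ 2 ∧
            (1 / Real.sqrt (α i)) * bval n v i (bundleF n (n - 1) F v j T \ X) ≤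
              bval n v i (bundleF n (n - 1) F v i T)) ∧
        (∀ (k : ℕ) (i j : Fin n), ∃ X ⊆ bundleF n (n - 1) F v j (k * n), X.card ≤ 1 ∧
            (1 / Real.sqrt (α i)) * bval n v i (bundleF n (n - 1) F v j (k * n) \ X) ≤
              bval n v i (bundleF n (n - 1) F v i (k * n))) := by
  classical
  have hn0 : 0 < n := hn
  refine ⟨S18.algF α hn0, ?_⟩
  intro v hv
  set B : ℕ → Fin n → Fin n → Prop := S18.BigS α v with hB
  set p : ℕ → Equiv.Perm (Fin n) := S18.mP B with hp
  set σ : ℕ → Fin n := S18.sigmaF α hn0 v with hσ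
  have halloc : ∀ t, allocF n (n-1) (S18.algF α hn0) v t = σ t := S18.alloc_eq α hn0 v
  have hsig : ∀ (b r : ℕ) (hr : r < n), σ (b*n + r) = (p b).symm ⟨r, hr⟩ := by
    intro b r hr
    exact S18.sigmaF_block α hn0 v b r hr
  have hsig2 : ∀ (b : ℕ) (j : Fin n), σ (b*n + ((p b) j : ℕ)) = j := by
    intro b j
    rw [hsig b _ (Fin.isLt _)]
    simp
  have hsig3 : ∀ (b : ℕ) (j : Fin n) (r : ℕ) (hr : r < n), σ (b*n+r) = j → r = ((p b) j : ℕ) := by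
    intro b j r hr h
    rw [hsig b r hr] at h
    have h2 : (⟨r, hr⟩ : Fin n) = (p b) j := (Equiv.symm_apply_eq _).mp h
    exact congrArg Fin.val h2
  have hinj : ∀ (j : Fin n), Function.Injective (fun b : ℕ => b*n + ((p b) j : ℕ)) := by
    intro j b b' h
    simp only at h
    have h1 : ((p b) j : ℕ) < n := Fin.isLt _
    have h2 : ((p b') j : ℕ) < n := Fin.isLt _
    rcases Nat.lt_trichotomy b b' with hlt | he | hgt
    · exfalso
      have h4 : (b+1)*n ≤ b'*n := Nat.mul_le_mul_right n hlt
      rw [Nat.add_mul, Nat.one_mul] at h4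
      omega
    · exact he
    · exfalso
      have h4 : (b'+1)*n ≤ b*n := Nat.mul_le_mul_right n hgt
      rw [Nat.add_mul, Nat.one_mul] at h4
      omega
  have hbundle : ∀ (k : ℕ) (j : Fin n),
      bundleF n (n-1) (S18.algF α hn0) v j (k*n)
        = (Finset.range k).image (fun b => b*n + ((p b) j : ℕ)) := by
    intro k j
    ext t
    simp only [bundleF, Finset.mem_filter, Finset.mem_range, Finset.mem_image, halloc]
    constructor
    · rintro ⟨htk, hσt⟩
      refine ⟨t / n, (Nat.div_lt_iff_lt_mul hn0).mpr htk, ?_⟩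
      have hdm : n * (t / n) + t % n = t := Nat.div_add_mod t n
      have hdm2 : (t/n)*n + t % n = t := by rw [Nat.mul_comm] at hdm; exact hdm
      have h3 : σ ((t/n)*n + t % n) = j := by rw [hdm2]; exact hσt
      have h4 := hsig3 (t/n) j (t % n) (Nat.mod_lt t hn0) h3
      omega
    · rintro ⟨b, hbk, rfl⟩
      constructor
      · have h5 : ((p b) j : ℕ) < n := Fin.isLt _
        have h6 : (b+1)*n ≤ k*n := Nat.mul_le_mul_right n hbk
        rw [Nat.add_mul, Nat.one_mul] at h6
        omega
      · exact hsig2 b j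
  -- main EF1 statement
  have EF1 : ∀ (k : ℕ) (i j : Fin n), ∃ X ⊆ bundleF n (n - 1) (S18.algF α hn0) v j (k * n),
      X.card ≤ 1 ∧
      (1 / Real.sqrt (α i)) * bval n v i (bundleF n (n - 1) (S18.algF α hn0) v j (k * n) \ X) ≤
        bval n v i (bundleF n (n - 1) (S18.algF α hn0) v i (k * n)) := by
    intro k i j
    set q : ℝ := Real.sqrt (α i) with hqdef
    have hα0 : (0:ℝ) ≤ α i := by linarith [hα i]
    have hq0 : 0 < q := Real.sqrt_pos.mpr (by linarith [hα i])
    have hqq : q * q = α i := Real.mul_self_sqrt hα0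
    have hq1 : 1 < q := by nlinarith [hα i]
    set fa : ℕ → ℝ := fun b => ((v (b*n + ((p b) i : ℕ)) i : ℝ)) with hfa
    set fc : ℕ → ℝ := fun b => ((v (b*n + ((p b) j : ℕ)) i : ℝ)) with hfc
    set hitP : ℕ → Prop := fun b => (∃ r, B b i r) ∧ ¬ B b i ((p b) i) ∧ B b i ((p b) j)
      with hhitP
    set compP : ℕ → Prop := fun b => B b i ((p b) i) ∧ ¬ B b i ((p b) j) with hcompP
    have hBa : ∀ b, B b i ((p b) i) ↔ q ≤ fa b := fun b => Iff.rfl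
    have hBc : ∀ b, B b i ((p b) j) ↔ q ≤ fc b := fun b => Iff.rfl
    have hcountR : ∀ (k : ℕ), ((S18.mSt B k i j : ℤ) : ℝ)
        = ∑ b ∈ Finset.range k, ((if hitP b then (1:ℝ) else 0) - (if compP b then 1 else 0)) := by
      intro k
      induction k with
      | zero => simp [S18.mSt]
      | succ b ih =>
          rw [Finset.sum_range_succ, ← ih, S18.mSt_succ]
          push_cast
          split_ifs <;> ring
    have hΦle : ∀ (k:ℕ), S18.mSt B k i j ≤ 1 := fun k => (S18.mSt_inv B k).1 i j
    have hkey : ∀ b, (q - 1) * ((if compP b then (1:ℝ) else 0) - (if hitP b then 1 else 0))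
        ≤ fa b - fc b / q := by
      intro b
      have ha1 : 1 ≤ fa b := (hv _ i).1
      have hc1 : 1 ≤ fc b := (hv _ i).1
      have ha2 : fa b ≤ α i := (hv _ i).2
      have hc2 : fc b ≤ α i := (hv _ i).2
      have hcq : fc b / q ≤ q := by rw [div_le_iff₀ hq0]; nlinarith
      by_cases h1 : hitP b
      · have h2 : ¬ compP b := fun hc => h1.2.1 hc.1
        rw [if_neg h2, if_pos h1]
        linarith
      · by_cases h2 : compP b
        · rw [if_pos h2, if_neg h1]
          have hwin : q ≤ fa b := (hBa b).mp h2.1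
          have hnb : ¬ (q ≤ fc b) := fun hh => h2.2 ((hBc b).mpr hh)
          have h3 : fc b / q ≤ 1 := by rw [div_le_one hq0]; linarith
          linarith
        · rw [if_neg h1, if_neg h2]
          by_cases hwin : B b i ((p b) i)
          · have hbc : B b i ((p b) j) := by
              by_contra hnb
              exact h2 ⟨hwin, hnb⟩
            have h3 : q ≤ fa b := (hBa b).mp hwin
            linarith
          · have hnb : ¬ B b i ((p b) j) := by
              intro hbc
              exact h1 ⟨⟨(p b) j, hbc⟩, hwin, hbc⟩
            have h4 : fc b < q := lt_of_not_ge (fun hh => hnb ((hBc b).mpr hh))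
            have h3 : fc b / q ≤ 1 := by rw [div_le_one hq0]; linarith
            linarith
    have hbvali : bval n v i (bundleF n (n - 1) (S18.algF α hn0) v i (k * n))
        = ∑ b ∈ Finset.range k, fa b := by
      rw [hbundle, bval, Finset.sum_image (fun b _ b' _ h => hinj i h)]
    by_cases hex : ∃ b ∈ Finset.range k, hitP b
    · obtain ⟨b0, hb0k, hb0⟩ := hex
      refine ⟨{b0*n + ((p b0) j : ℕ)}, ?_, by simp, ?_⟩
      · rw [hbundle]
        simp only [Finset.singleton_subset_iff, Finset.mem_image]
        exact ⟨b0, hb0k, rfl⟩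
      · rw [hbundle, Finset.sdiff_singleton_eq_erase, hbvali]
        have him : ((Finset.range k).image (fun b => b*n + ((p b) j:ℕ))).erase
              (b0*n + ((p b0) j:ℕ))
            = ((Finset.range k).erase b0).image (fun b => b*n + ((p b) j:ℕ)) :=
          (Finset.image_erase (hinj j) _ _).symm
        rw [him, bval, Finset.sum_image (fun b _ b' _ h => hinj j h)]
        -- aggregate inequality
        have hsum0 : (0:ℝ) ≤ ∑ b ∈ (Finset.range k).erase b0,
            ((if compP b then (1:ℝ) else 0) - (if hitP b then 1 else 0)) := by
          have he1 : ∑ b ∈ (Finset.range k).erase b0,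
              ((if hitP b then (1:ℝ) else 0) - (if compP b then 1 else 0))
              = (∑ b ∈ Finset.range k,
                  ((if hitP b then (1:ℝ) else 0) - (if compP b then 1 else 0)))
                - ((if hitP b0 then (1:ℝ) else 0) - (if compP b0 then 1 else 0)) :=
            Finset.sum_erase_eq_sub hb0k
          have hcomp0 : ¬ compP b0 := fun hc => hb0.2.1 hc.1
          have hb0v : ((if hitP b0 then (1:ℝ) else 0) - (if compP b0 then 1 else 0)) = 1 := by
            rw [if_pos hb0, if_neg hcomp0]; ring
          have hmle : ((S18.mSt B k i j : ℤ) : ℝ) ≤ 1 := by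
            exact_mod_cast hΦle k
          rw [← hcountR] at he1
          have he2 : ∑ b ∈ (Finset.range k).erase b0,
              ((if compP b then (1:ℝ) else 0) - (if hitP b then 1 else 0))
              = - ∑ b ∈ (Finset.range k).erase b0,
                  ((if hitP b then (1:ℝ) else 0) - (if compP b then 1 else 0)) := by
            rw [← Finset.sum_neg_distrib]
            apply Finset.sum_congr rfl
            intro x _
            ring
          rw [he2, he1, hb0v]
          linarith
        have hsum1 : ∑ b ∈ (Finset.range k).erase b0, (fc b / q)
            ≤ ∑ b ∈ (Finset.range k).erase b0, fa b := by
          have h5 : (q-1) * ∑ b ∈ (Finset.range k).erase b0,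
              ((if compP b then (1:ℝ) else 0) - (if hitP b then 1 else 0))
              ≤ ∑ b ∈ (Finset.range k).erase b0, (fa b - fc b / q) := by
            rw [Finset.mul_sum]
            exact Finset.sum_le_sum (fun b _ => hkey b)
          have h6 : (0:ℝ) ≤ (q-1) * ∑ b ∈ (Finset.range k).erase b0,
              ((if compP b then (1:ℝ) else 0) - (if hitP b then 1 else 0)) :=
            mul_nonneg (by linarith) hsum0
          have h7 := le_trans h6 h5
          rw [Finset.sum_sub_distrib] at h7
          linarith
        have h8 : ∑ b ∈ (Finset.range k).erase b0, fa b ≤ ∑ b ∈ Finset.range k, fa b := by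
          apply Finset.sum_le_sum_of_subset_of_nonneg (Finset.erase_subset _ _)
          intro b _ _
          positivity
        have h9 : (1 / q) * ∑ b ∈ (Finset.range k).erase b0, fc b
            = ∑ b ∈ (Finset.range k).erase b0, (fc b / q) := by
          rw [one_div_mul_eq_div, Finset.sum_div]
        rw [h9]
        linarith
    · push_neg at hex
      refine ⟨∅, Finset.empty_subset _, by simp, ?_⟩
      rw [Finset.sdiff_empty, hbundle, hbvali, bval,
        Finset.sum_image (fun b _ b' _ h => hinj j h)]
      have hsum1 : ∑ b ∈ Finset.range k, (fc b / q) ≤ ∑ b ∈ Finset.range k, fa b := by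
        apply Finset.sum_le_sum
        intro b hb
        have h5 := hkey b
        rw [if_neg (hex b hb)] at h5
        have h6 : (0:ℝ) ≤ (q-1) * ((if compP b then (1:ℝ) else 0) - 0) := by
          apply mul_nonneg (by linarith)
          split <;> norm_num
        linarith
      have h9 : (1 / q) * ∑ b ∈ Finset.range k, fc b
          = ∑ b ∈ Finset.range k, (fc b / q) := by
        rw [one_div_mul_eq_div, Finset.sum_div]
      rw [h9]
      linarith
  refine ⟨?_, EF1⟩
  -- EF2 at arbitrary T from EF1 at (T/n)*n
  intro T i j
  obtain ⟨X, hX, hXc, hXineq⟩ := EF1 (T / n) i j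
  set k := T / n with hk
  set pt := k*n + ((p k) j : ℕ) with hpt
  have hknT : k * n ≤ T := by
    rw [hk]
    exact Nat.div_mul_le_self T n
  have hbmono : ∀ (l : Fin n), bundleF n (n-1) (S18.algF α hn0) v l (k*n)
      ⊆ bundleF n (n-1) (S18.algF α hn0) v l T := by
    intro l
    apply Finset.filter_subset_filter
    exact Finset.range_subset_range.mpr hknT
  set X' := X ∪ (bundleF n (n-1) (S18.algF α hn0) v j T).filter (fun t => t = pt) with hX'
  have hq0 : 0 < Real.sqrt (α i) := Real.sqrt_pos.mpr (by linarith [hα i])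
  refine ⟨X', ?_, ?_, ?_⟩
  · apply Finset.union_subset
    · exact hX.trans (hbmono j)
    · exact Finset.filter_subset _ _
  · apply le_trans (Finset.card_union_le _ _)
    have h1 : ((bundleF n (n-1) (S18.algF α hn0) v j T).filter (fun t => t = pt)).card ≤ 1 := by
      have h2 : (bundleF n (n-1) (S18.algF α hn0) v j T).filter (fun t => t = pt) ⊆ {pt} := by
        intro t ht
        simp only [Finset.mem_filter] at ht
        simp [ht.2]
      exact le_trans (Finset.card_le_card h2) (by simp)
    omega
  · have hsub1 : bundleF n (n-1) (S18.algF α hn0) v j T \ X'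
        ⊆ bundleF n (n-1) (S18.algF α hn0) v j (k*n) \ X := by
      intro t ht
      simp only [Finset.mem_sdiff] at ht ⊢
      obtain ⟨htb, htX'⟩ := ht
      have htT : t < T ∧ σ t = j := by
        have := htb
        simp only [bundleF, Finset.mem_filter, Finset.mem_range, halloc] at this
        exact this
      by_cases hlt : t < k*n
      · constructor
        · simp only [bundleF, Finset.mem_filter, Finset.mem_range, halloc]
          exact ⟨hlt, htT.2⟩
        · intro hX0
          exact htX' (Finset.mem_union_left _ hX0)
      · exfalso
        have hTmod : T ≤ k*n + n := by
          have h1 := Nat.div_add_mod T n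
          rw [← hk] at h1
          have h2 := Nat.mod_lt T hn0
          have h3 : n * k = k * n := Nat.mul_comm n k
          omega
        have hge : k*n ≤ t := le_of_not_gt hlt
        have h2 : t = k*n + (t % n) := by
          have h4 : t / n = k := by
            apply Nat.div_eq_of_lt_le
            · exact hge
            · calc t < T := htT.1
                _ ≤ k*n + n := hTmod
                _ = (k+1)*n := by ring
          have h1 := Nat.div_add_mod t n
          rw [h4] at h1
          have h5 : n * k = k * n := Nat.mul_comm _ _
          omega
        have h3 : t % n = ((p k) j : ℕ) := by
          apply hsig3 k j (t % n) (Nat.mod_lt t hn0)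
          rw [← h2]
          exact htT.2
        have h6 : t = pt := by rw [hpt, ← h3]; exact h2
        exact htX' (Finset.mem_union_right _ (Finset.mem_filter.mpr ⟨htb, h6⟩))
    calc (1 / Real.sqrt (α i)) * bval n v i (bundleF n (n-1) (S18.algF α hn0) v j T \ X')
        ≤ (1 / Real.sqrt (α i)) * bval n v i (bundleF n (n-1) (S18.algF α hn0) v j (k*n) \ X) := by
          apply mul_le_mul_of_nonneg_left _ (by positivity)
          apply Finset.sum_le_sum_of_subset_of_nonneg hsub1
          intro t _ _
          positivity
      _ ≤ bval n v i (bundleF n (n-1) (S18.algF α hn0) v i (k*n)) := hXineq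
      _ ≤ bval n v i (bundleF n (n-1) (S18.algF α hn0) v i T) := by
          apply Finset.sum_le_sum_of_subset_of_nonneg (hbmono i)
          intro t _ _
          positivity


end
end

section
/- Let n ≥ 1 be an integer and let w be an additive valuation on a finite set S of t goods such that every good has w-value either 1 or α, where α ≥ 1 is a real number, and exactly h goods have w-value α, with h ≤ n−1. Then the n-agent maximin share satisfies μ_w^n(S) ≤ ⌊(t−h)/(n−h)⌋. -/
open Finset
open scoped Classical

noncomputable section

/-- If every good of `S` has value `1` or `α ≥ 1`, and exactly `h ≤ n−1` goods have value `α`,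
then the `n`-agent maximin share of `S` is at most `⌊(|S|−h)/(n−h)⌋`. -/
theorem statement19 {G : Type*} (n : ℕ) (hn : 1 ≤ n) (S : Finset G) (w : G → ℝ)
    (α : ℝ) (hα : 1 ≤ α) (hw : ∀ g ∈ S, w g = 1 ∨ w g = α)
    (h : ℕ) (hcard : (S.filter fun g => w g = α).card = h) (hh : h ≤ n - 1) :
    mmsG n S w ≤ (((S.card - h) / (n - h) : ℕ) : ℝ) := by
  have hn0 : 0 < n := hn
  have hhn : h < n := lt_of_le_of_lt hh (Nat.sub_lt hn0 one_pos)
  have hnh : 0 < n - h := Nat.sub_pos_of_lt hhn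
  set q : ℕ := (S.card - h) / (n - h) with hq
  apply Real.sSup_le _ (by positivity)
  rintro x ⟨P, rfl⟩
  set A := S.filter (fun g => w g = α) with hA
  set B := S \ A with hB
  have hBcard : B.card = S.card - h := by
    rw [hB, card_sdiff_of_subset (filter_subset _ _), hcard]
  have hBone : ∀ g ∈ B, w g = 1 := by
    intro g hg
    rw [hB, mem_sdiff] at hg
    rcases hw g hg.1 with h1 | h2
    · exact h1
    · exact absurd (hA ▸ mem_filter.mpr ⟨hg.1, h2⟩) hg.2
  set T := A.image P with hT
  have hTcard : T.card ≤ h := hcard ▸ (hT ▸ card_image_le)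
  have hcompl : n - h ≤ Tᶜ.card := by
    rw [card_compl, Fintype.card_fin]
    exact Nat.sub_le_sub_left hTcard n
  -- find a bundle in Tᶜ with few goods
  have hex : ∃ j ∈ Tᶜ, (B.filter (fun g => P g = j)).card ≤ q := by
    by_contra hcon
    push_neg at hcon
    have hsum : ∑ j : Fin n, (B.filter (fun g => P g = j)).card = B.card :=
      (card_eq_sum_card_fiberwise (fun g _ => mem_univ (P g))).symm
    have h1 : (q + 1) * (n - h) ≤ ∑ j ∈ Tᶜ, (B.filter (fun g => P g = j)).card := by
      calc (q + 1) * (n - h) ≤ (q + 1) * Tᶜ.card := Nat.mul_le_mul_left _ hcompl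
        _ = ∑ _j ∈ Tᶜ, (q + 1) := by rw [sum_const, smul_eq_mul, mul_comm]
        _ ≤ _ := sum_le_sum fun j hj => hcon j hj
    have h2 : ∑ j ∈ Tᶜ, (B.filter (fun g => P g = j)).card ≤ S.card - h := by
      rw [← hBcard, ← hsum]
      exact sum_le_sum_of_subset (subset_univ _)
    have h3 : S.card - h < (q + 1) * (n - h) := by
      rw [← Nat.div_lt_iff_lt_mul hnh]
      exact Nat.lt_succ_self _
    omega
  obtain ⟨j, hjT, hjcard⟩ := hex
  have hfilt : S.filter (fun g => P g = j) = B.filter (fun g => P g = j) := by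
    ext g
    simp only [mem_filter, hB, mem_sdiff]
    constructor
    · rintro ⟨hgS, hgP⟩
      refine ⟨⟨hgS, fun hgA => ?_⟩, hgP⟩
      exact (mem_compl.mp hjT) (hT ▸ mem_image.mpr ⟨g, hgA, hgP⟩)
    · rintro ⟨⟨hgS, _⟩, hgP⟩
      exact ⟨hgS, hgP⟩
  have hval : ∑ g ∈ S.filter (fun g => P g = j), w g
      = ((B.filter (fun g => P g = j)).card : ℝ) := by
    rw [hfilt]
    rw [Finset.sum_congr rfl (fun g hg => hBone g (mem_filter.mp hg).1)]
    simp
  calc (⨅ j : Fin n, ∑ g ∈ S.filter (fun g => P g = j), w g)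
      ≤ ∑ g ∈ S.filter (fun g => P g = j), w g :=
        ciInf_le (Set.Finite.bddBelow (Set.finite_range _)) j
    _ = ((B.filter (fun g => P g = j)).card : ℝ) := hval
    _ ≤ (q : ℝ) := Nat.cast_le.mpr hjcard

end
end
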